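/- arXiv:2405.05867 — 2 statements merged into one kernel-verified Lean document; each statement's English description precedes it below -/
import Mathlib

section
/- Let α be a peak composition all of whose parts are at most 3, and let S ⊆ I_α. Then, as multisets, {Des(w_r(T)) : T ∈ ⋂_{s∈S} A_α(s)} = {Des(w_r(T)) : T ∈ SPIT(Δ_S(α))} (for S = ∅ the intersection is taken to be SPIT(α)). -/
namespace PaperSPIT

/-- The `j`-th part (1-indexed) of a composition presented as a list. -/
def part (α : List ℕ) (j : ℕ) : ℕ := α.getD (j - 1) 0

/-- The largest part. -/
def maxPart (α : List ℕ) : ℕ := α.foldr max 0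

/-- The composition diagram: boxes `(i, j)` (column `i`, row `j`), both 1-indexed,
rows numbered from bottom to top. -/
def cd (α : List ℕ) : Finset (ℕ × ℕ) :=
  (Finset.Icc 1 (maxPart α) ×ˢ Finset.Icc 1 α.length).filter fun p => p.1 ≤ part α p.2

/-- `α` is a composition of `n`. -/
def IsComposition (n : ℕ) (α : List ℕ) : Prop :=
  (∀ a ∈ α, 0 < a) ∧ α.sum = n

/-- `α` is a peak composition of `n`: all parts except possibly the last are `> 1`. -/
def IsPeakComposition (n : ℕ) (α : List ℕ) : Prop :=
  IsComposition n α ∧ ∀ i, i + 1 < α.length → 1 < α.getD i 0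

/-- A standard filling of `cd α`: a bijection from the boxes onto `{1, …, n}`
(normalized to be `0` off the diagram). -/
def IsStandardFilling (α : List ℕ) (T : ℕ × ℕ → ℕ) : Prop :=
  Set.BijOn T (cd α : Set (ℕ × ℕ)) (Set.Icc 1 α.sum) ∧
  ∀ p : ℕ × ℕ, p ∉ cd α → T p = 0

def RowsIncrease (α : List ℕ) (T : ℕ × ℕ → ℕ) : Prop :=
  ∀ i j : ℕ, (i, j) ∈ cd α → (i + 1, j) ∈ cd α → T (i, j) < T (i + 1, j)

def RowsWeaklyIncrease (α : List ℕ) (T : ℕ × ℕ → ℕ) : Prop :=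
  ∀ i j : ℕ, (i, j) ∈ cd α → (i + 1, j) ∈ cd α → T (i, j) ≤ T (i + 1, j)

def FirstColIncreases (α : List ℕ) (T : ℕ × ℕ → ℕ) : Prop :=
  ∀ j : ℕ, (1, j) ∈ cd α → (1, j + 1) ∈ cd α → T (1, j) < T (1, j + 1)

/-- Standard immaculate tableau. -/
def IsSIT (α : List ℕ) (T : ℕ × ℕ → ℕ) : Prop :=
  IsStandardFilling α T ∧ RowsIncrease α T ∧ FirstColIncreases α T

/-- Peak-tableau condition: for every `1 ≤ k ≤ n` the boxes with entries `≤ k`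
form the diagram of a peak composition. -/
def PeakCond (α : List ℕ) (T : ℕ × ℕ → ℕ) : Prop :=
  ∀ k : ℕ, 1 ≤ k → k ≤ α.sum → ∃ β : List ℕ,
    IsPeakComposition k β ∧ (cd α).filter (fun p => T p ≤ k) = cd β

/-- Standard peak immaculate tableau. -/
def IsSPIT (α : List ℕ) (T : ℕ × ℕ → ℕ) : Prop := IsSIT α T ∧ PeakCond α T

def SPITset (α : List ℕ) : Set (ℕ × ℕ → ℕ) := {T | IsSPIT α T}

/-- The Young triple condition. -/
def YoungTriple (α : List ℕ) (T : ℕ × ℕ → ℕ) : Prop :=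
  ∀ k i j : ℕ, i < j → (k, j) ∈ cd α → (k + 1, i) ∈ cd α → T (k, j) ≤ T (k + 1, i) →
    (k + 1, j) ∈ cd α ∧ T (k + 1, j) < T (k + 1, i)

/-- Standard Young composition tableau. -/
def IsSYCT (α : List ℕ) (T : ℕ × ℕ → ℕ) : Prop :=
  IsStandardFilling α T ∧ RowsIncrease α T ∧ FirstColIncreases α T ∧ YoungTriple α T

def SYCTset (α : List ℕ) : Set (ℕ × ℕ → ℕ) := {T | IsSYCT α T}

/-- Standard peak Young composition tableau. -/
def IsSPYCT (α : List ℕ) (T : ℕ × ℕ → ℕ) : Prop := IsSYCT α T ∧ PeakCond α T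

def SPYCTset (α : List ℕ) : Set (ℕ × ℕ → ℕ) := {T | IsSPYCT α T}

/-- Row reading word `w_r`: rows from top to bottom, each row left to right. -/
def wR (α : List ℕ) (T : ℕ × ℕ → ℕ) : List ℕ :=
  ((List.range α.length).reverse.map fun j =>
    (List.range (part α (j + 1))).map fun i => T (i + 1, j + 1)).flatten

/-- The `i`-th column of a filling, read bottom to top. -/
def colList (α : List ℕ) (T : ℕ × ℕ → ℕ) (i : ℕ) : List ℕ :=
  ((List.range α.length).filter fun j => decide (i ≤ part α (j + 1))).map
    fun j => T (i, j + 1)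

/-- Column reading word `w_c`: columns left to right, each column bottom to top. -/
def wC (α : List ℕ) (T : ℕ × ℕ → ℕ) : List ℕ :=
  ((List.range (maxPart α)).map fun i => colList α T (i + 1)).flatten

/-- Young reading word `w_Y`: first column top to bottom, then subsequent columns
bottom to top, columns left to right. -/
def wY (α : List ℕ) (T : ℕ × ℕ → ℕ) : List ℕ :=
  (colList α T 1).reverse ++
    ((List.range (maxPart α - 1)).map fun i => colList α T (i + 2)).flatten

/-- Descent set of a word with distinct letters: `i` such that `i` and `i+1` occur
and `i` occurs to the right of `i+1`. -/
def DesWord (w : List ℕ) : Finset ℕ :=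
  w.toFinset.filter fun i => (i + 1) ∈ w ∧ w.idxOf (i + 1) < w.idxOf i


/-- `I_α = {i : 1 ≤ i ≤ ℓ(α)−1, α_i = 3, α_{i+1} ≠ 1}`. -/
def Ialpha (α : List ℕ) : Finset ℕ :=
  (Finset.Icc 1 (α.length - 1)).filter fun i => part α i = 3 ∧ part α (i + 1) ≠ 1

/-- `A_α(s) = {T ∈ SPIT(α) : T_{α_s, s} > T_{α_{s+1}, s+1}}`. -/
def Aset (α : List ℕ) (s : ℕ) : Set (ℕ × ℕ → ℕ) :=
  {T ∈ SPITset α | T (part α (s + 1), s + 1) < T (part α s, s)}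

/-- The length of the maximal run of consecutive elements of `S` ending at `k − 1`
(for `S` with `0 ∉ S`, e.g. `S ⊆ I_α`). -/
def runLen (S : Finset ℕ) (k : ℕ) : ℕ :=
  k - 1 - (((Finset.range k).filter fun u => u ∉ S).sup id)

/-- `Δ_S(α)`: writing `S ⊆ I_α` as a disjoint union of maximal intervals and applying
`Δ` on each of them; pointwise, the `k`-th part becomes `α_k − 1` if `k ∈ S`,
`α_k + (length of the maximal run of `S` ending at `k−1`)` if `k ∉ S` and `k − 1 ∈ S`,
and `α_k` otherwise. -/
def deltaS (α : List ℕ) (S : Finset ℕ) : List ℕ :=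
  (List.range α.length).map fun k0 =>
    if k0 + 1 ∈ S then part α (k0 + 1) - 1
    else if k0 ∈ S then part α (k0 + 1) + runLen S (k0 + 1)
    else part α (k0 + 1)

section General
variable {γ : List ℕ} {T : ℕ × ℕ → ℕ}

theorem le_maxPart {a : ℕ} (h : a ∈ γ) : a ≤ maxPart γ := by
  induction γ with
  | nil => simp at h
  | cons b l ih =>
    rcases List.mem_cons.1 h with rfl | h
    · simp [maxPart, List.foldr]
    · exact le_trans (ih h) (by simp [maxPart, List.foldr])

theorem part_le_maxPart {r : ℕ} (h1 : 1 ≤ r) (h2 : r ≤ γ.length) :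
    part γ r ≤ maxPart γ := by
  apply le_maxPart
  have : r - 1 < γ.length := by omega
  simp only [part, List.getD_eq_getElem?_getD, List.getElem?_eq_getElem this]
  exact List.getElem_mem _

theorem mem_cd {i r : ℕ} :
    (i, r) ∈ cd γ ↔ 1 ≤ i ∧ 1 ≤ r ∧ r ≤ γ.length ∧ i ≤ part γ r := by
  constructor
  · intro h
    simp only [cd, Finset.mem_filter, Finset.mem_product, Finset.mem_Icc] at h
    exact ⟨h.1.1.1, h.1.2.1, h.1.2.2, h.2⟩
  · rintro ⟨h1, h2, h3, h4⟩
    simp only [cd, Finset.mem_filter, Finset.mem_product, Finset.mem_Icc]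
    exact ⟨⟨⟨h1, le_trans h4 (part_le_maxPart h2 h3)⟩, h2, h3⟩, h4⟩

theorem mem_cd' {p : ℕ × ℕ} :
    p ∈ cd γ ↔ 1 ≤ p.1 ∧ 1 ≤ p.2 ∧ p.2 ≤ γ.length ∧ p.1 ≤ part γ p.2 := by
  obtain ⟨i, r⟩ := p; exact mem_cd

theorem sum_eq_sum_part : γ.sum = ∑ r ∈ Finset.Icc 1 γ.length, part γ r := by
  have h : ∀ (L : List ℕ), L.sum = ∑ k ∈ Finset.range L.length, L.getD k 0 := by
    intro L
    induction L with
    | nil => simp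
    | cons a l ih =>
      rw [List.sum_cons, ih, List.length_cons, Finset.sum_range_succ']
      simp only [List.getD_cons_succ, List.getD_cons_zero]
      ring
  rw [h]
  apply Finset.sum_nbij' (fun k => k + 1) (fun r => r - 1) <;>
    simp +contextual [part] <;> omega

theorem card_cd : (cd γ).card = γ.sum := by
  have hdecomp : cd γ = (Finset.Icc 1 γ.length).biUnion
      (fun r => (Finset.Icc 1 (part γ r)).image (fun i => (i, r))) := by
    ext ⟨i, r⟩
    simp only [mem_cd, Finset.mem_biUnion, Finset.mem_Icc, Finset.mem_image]
    constructor
    · rintro ⟨h1, h2, h3, h4⟩; exact ⟨r, ⟨h2, h3⟩, i, ⟨h1, h4⟩, rfl⟩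
    · rintro ⟨r', ⟨h2, h3⟩, i', ⟨h1, h4⟩, h⟩
      rw [Prod.ext_iff] at h
      obtain ⟨h5, h6⟩ := h
      simp only at h5 h6
      subst h5 h6
      exact ⟨h1, h2, h3, h4⟩
  rw [hdecomp, Finset.card_biUnion, sum_eq_sum_part]
  · apply Finset.sum_congr rfl
    intro r _
    rw [Finset.card_image_of_injective _ (fun a b hab => by simpa using hab)]
    simp
  · intro r _ s _ hrs
    apply Finset.disjoint_left.2
    rintro ⟨i, t⟩ hi hj
    simp only [Finset.mem_image] at hi hj
    obtain ⟨_, _, h1⟩ := hi; obtain ⟨_, _, h2⟩ := hj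
    rw [Prod.ext_iff] at h1 h2
    simp only at h1 h2
    exact hrs (h1.2.trans h2.2.symm)

end General
section Reading
variable {γ : List ℕ} {T : ℕ × ℕ → ℕ}

/-- Reading order: `p` is read strictly before `q`. -/
def readlt (p q : ℕ × ℕ) : Prop := q.2 < p.2 ∨ (p.2 = q.2 ∧ p.1 < q.1)

theorem readlt_asymm {p q : ℕ × ℕ} (h : readlt p q) : ¬ readlt q p := by
  unfold readlt at *; omega

theorem readlt_total {p q : ℕ × ℕ} (h : p ≠ q) : readlt p q ∨ readlt q p := by
  unfold readlt
  rcases p with ⟨a,b⟩; rcases q with ⟨c,d⟩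
  simp only [ne_eq, Prod.mk.injEq, not_and] at h
  by_cases hbd : b = d
  · subst hbd; have := h; omega
  · omega

/-- The list of boxes in reading order. -/
def boxList (γ : List ℕ) : List (ℕ × ℕ) :=
  ((List.range γ.length).reverse.map fun j =>
    (List.range (part γ (j + 1))).map fun i => ((i + 1 : ℕ), j + 1)).flatten

theorem wR_eq_map : wR γ T = (boxList γ).map T := by
  simp [wR, boxList, List.map_flatten, List.map_map, Function.comp_def]

theorem mem_boxList {p : ℕ × ℕ} : p ∈ boxList γ ↔ p ∈ cd γ := by
  rcases p with ⟨i, r⟩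
  simp only [boxList, List.mem_flatten, List.mem_map, List.mem_reverse, List.mem_range, mem_cd]
  constructor
  · rintro ⟨l, ⟨j, hj, rfl⟩, hl⟩
    simp only [List.mem_map, List.mem_range] at hl
    obtain ⟨i', hi', h⟩ := hl
    rw [Prod.ext_iff] at h
    obtain ⟨h1, h2⟩ := h
    simp only at h1 h2
    subst h1 h2
    exact ⟨by omega, by omega, by omega, by omega⟩
  · rintro ⟨h1, h2, h3, h4⟩
    have hr : r - 1 + 1 = r := by omega
    refine ⟨_, ⟨r - 1, by omega, rfl⟩, ?_⟩
    simp only [List.mem_map, List.mem_range, hr]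
    exact ⟨i - 1, by omega, by rw [Prod.ext_iff]; constructor <;> simp <;> omega⟩

theorem pairwise_boxList : (boxList γ).Pairwise readlt := by
  rw [boxList, List.pairwise_flatten]
  refine ⟨?_, ?_⟩
  · intro l hl
    simp only [List.mem_map] at hl
    obtain ⟨j, _, rfl⟩ := hl
    rw [List.pairwise_map]
    have : (List.range (part γ (j+1))).Pairwise (· < ·) := List.pairwise_lt_range
    apply this.imp
    intro a b hab
    right; exact ⟨rfl, by omega⟩
  · rw [List.pairwise_map]
    have : ((List.range γ.length).reverse).Pairwise (· > ·) := by
      rw [List.pairwise_reverse]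
      exact List.pairwise_lt_range
    apply this.imp
    intro a b hab x hx y hy
    simp only [List.mem_map, List.mem_range] at hx hy
    obtain ⟨i1, _, rfl⟩ := hx
    obtain ⟨i2, _, rfl⟩ := hy
    left; simpa using hab

theorem my_indexOf_lt {A : Type*} [BEq A] [LawfulBEq A] {l : List A} {p : A} (h : p ∈ l) :
    l.idxOf p < l.length := by
  induction l with
  | nil => simp at h
  | cons a l ih =>
    by_cases hap : a = p
    · subst hap; simp [List.idxOf_cons]
    · have hb : (a == p) = false := beq_eq_false_iff_ne.2 hap
      have hp' : p ∈ l := by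
        rcases List.mem_cons.1 h with h' | h'
        · exact absurd h'.symm hap
        · exact h'
      simp only [List.idxOf_cons, hb, cond_false, List.length_cons]
      exact Nat.succ_lt_succ (ih hp')

theorem my_getElem_indexOf {A : Type*} [BEq A] [LawfulBEq A] {l : List A} {p : A} (h : p ∈ l)
    {k : ℕ} (hk : k < l.length) (hik : l.idxOf p = k) : l[k] = p := by
  induction l generalizing k with
  | nil => simp at h
  | cons a l ih =>
    by_cases hap : a = p
    · subst hap
      simp only [List.idxOf_cons, beq_self_eq_true, cond_true] at hik
      subst hik
      simp
    · have hb : (a == p) = false := beq_eq_false_iff_ne.2 hap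
      have hp' : p ∈ l := by
        rcases List.mem_cons.1 h with h' | h'
        · exact absurd h'.symm hap
        · exact h'
      simp only [List.idxOf_cons, hb, cond_false] at hik
      rcases k with _ | k
      · omega
      · simp only [List.getElem_cons_succ]
        exact ih hp' (by simpa using hk) (by omega)

theorem indexOf_map_eq {l : List (ℕ × ℕ)} {p : ℕ × ℕ} (hp : p ∈ l)
    (hinj : ∀ a ∈ l, T a = T p → a = p) :
    (l.map T).idxOf (T p) = l.idxOf p := by
  induction l with
  | nil => simp at hp
  | cons a l ih =>
    by_cases hap : a = p
    · subst hap; simp [List.idxOf_cons]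
    · have hTa : T a ≠ T p := fun h => hap (hinj a List.mem_cons_self h)
      have hp' : p ∈ l := by
        rcases List.mem_cons.1 hp with h | h
        · exact absurd h.symm hap
        · exact h
      have h1 : (T a == T p) = false := beq_eq_false_iff_ne.2 hTa
      have h2 : (a == p) = false := beq_eq_false_iff_ne.2 hap
      simp only [List.map_cons, List.idxOf_cons, h1, h2, cond_false]
      rw [ih hp' (fun b hb => hinj b (List.mem_cons_of_mem a hb))]

theorem indexOf_lt_indexOf_iff {l : List (ℕ × ℕ)} (hpw : l.Pairwise readlt)
    {p q : ℕ × ℕ} (hp : p ∈ l) (hq : q ∈ l) :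
    l.idxOf p < l.idxOf q ↔ readlt p q := by
  have hlp := my_indexOf_lt hp
  have hlq := my_indexOf_lt hq
  rw [List.pairwise_iff_getElem] at hpw
  constructor
  · intro h
    have := hpw _ _ hlp hlq h
    rwa [my_getElem_indexOf hp hlp rfl, my_getElem_indexOf hq hlq rfl] at this
  · intro h
    rcases lt_trichotomy (l.idxOf p) (l.idxOf q) with h' | h' | h'
    · exact h'
    · exfalso
      have e1 := my_getElem_indexOf hp hlp rfl
      have e2 := my_getElem_indexOf hq hlp h'.symm
      rw [e1] at e2
      subst e2
      exact readlt_asymm h h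
    · exfalso
      have := hpw _ _ hlq hlp h'
      rw [my_getElem_indexOf hp hlp rfl, my_getElem_indexOf hq hlq rfl] at this
      exact readlt_asymm h this

theorem mem_wR_iff {v : ℕ} : v ∈ wR γ T ↔ ∃ p ∈ cd γ, T p = v := by
  rw [wR_eq_map, List.mem_map]
  constructor
  · rintro ⟨p, hp, rfl⟩; exact ⟨p, mem_boxList.1 hp, rfl⟩
  · rintro ⟨p, hp, rfl⟩; exact ⟨p, mem_boxList.2 hp, rfl⟩

theorem indexOf_wR (hinj : Set.InjOn T (cd γ)) {p : ℕ × ℕ} (hp : p ∈ cd γ) :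
    (wR γ T).idxOf (T p) = (boxList γ).idxOf p := by
  rw [wR_eq_map]
  exact indexOf_map_eq (mem_boxList.2 hp)
    (fun a ha h => hinj (mem_boxList.1 ha) hp h)

/-- Characterization of the descent set of the reading word of an injective filling. -/
theorem mem_DesWord_iff (hinj : Set.InjOn T (cd γ)) {v : ℕ} :
    v ∈ DesWord (wR γ T) ↔
      ∃ p ∈ cd γ, ∃ q ∈ cd γ, T p = v ∧ T q = v + 1 ∧ readlt q p := by
  simp only [DesWord, Finset.mem_filter, List.mem_toFinset]
  constructor
  · rintro ⟨hv, hv1, hlt⟩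
    obtain ⟨p, hp, hpv⟩ := mem_wR_iff.1 hv
    obtain ⟨q, hq, hqv⟩ := mem_wR_iff.1 hv1
    refine ⟨p, hp, q, hq, hpv, hqv, ?_⟩
    subst hpv
    rw [← hqv, indexOf_wR hinj hp, indexOf_wR hinj hq] at hlt
    rwa [indexOf_lt_indexOf_iff pairwise_boxList (mem_boxList.2 hq)
        (mem_boxList.2 hp)] at hlt
  · rintro ⟨p, hp, q, hq, hpv, hqv, hlt⟩
    refine ⟨mem_wR_iff.2 ⟨p, hp, hpv⟩, mem_wR_iff.2 ⟨q, hq, hqv⟩, ?_⟩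
    subst hpv
    rw [← hqv, indexOf_wR hinj hp, indexOf_wR hinj hq]
    exact (indexOf_lt_indexOf_iff pairwise_boxList (mem_boxList.2 hq)
        (mem_boxList.2 hp)).2 hlt

end Reading
section Criterion

/-- Abstract characterization of "the box set is the diagram of a peak composition of `k`". -/
def IsPeakDiagram (k : ℕ) (B : Finset (ℕ × ℕ)) : Prop :=
  B.card = k ∧
  (∀ i r : ℕ, (i, r) ∈ B → 1 ≤ i ∧ 1 ≤ r) ∧
  (∀ i r : ℕ, (i + 2, r) ∈ B → (i + 1, r) ∈ B) ∧
  (∀ i r : ℕ, (i, r + 2) ∈ B → (1, r + 1) ∈ B) ∧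
  (∀ r : ℕ, (1, r) ∈ B → (1, r + 1) ∈ B → (2, r) ∈ B)

variable {k : ℕ} {B : Finset (ℕ × ℕ)}

theorem IsPeakDiagram.left_closed (hB : IsPeakDiagram k B) {i r j : ℕ}
    (h : (i, r) ∈ B) (hj1 : 1 ≤ j) (hji : j ≤ i) : (j, r) ∈ B := by
  obtain ⟨-, h2, h3, -, -⟩ := hB
  induction i with
  | zero => omega
  | succ i ih =>
    rcases Nat.lt_or_ge j (i + 1) with hj | hj
    · have h' : (i - 1 + 2, r) ∈ B := by
        rw [(by omega : i - 1 + 2 = i + 1)]; exact h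
      have h'' := h3 _ _ h'
      rw [(by omega : i - 1 + 1 = i)] at h''
      exact ih h'' (by omega)
    · have : j = i + 1 := by omega
      subst this; exact h

theorem IsPeakDiagram.down_closed (hB : IsPeakDiagram k B) {i r t : ℕ}
    (h : (i, r) ∈ B) (ht1 : 1 ≤ t) (htr : t < r) : (1, t) ∈ B := by
  obtain ⟨-, h2, h3, h4, -⟩ := hB
  induction r generalizing i with
  | zero => omega
  | succ r ih =>
    rcases Nat.lt_or_ge t r with hj | hj
    · have h' : (i, r - 1 + 2) ∈ B := by
        rw [(by omega : r - 1 + 2 = r + 1)]; exact h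
      have h'' := h4 _ _ h'
      rw [(by omega : r - 1 + 1 = r)] at h''
      exact ih h'' hj
    · have h' : (i, t - 1 + 2) ∈ B := by
        rw [(by omega : t - 1 + 2 = r + 1)]; exact h
      have h'' := h4 _ _ h'
      rwa [(by omega : t - 1 + 1 = t)] at h''

/-- Rows strictly below a nonempty row have at least two boxes. -/
theorem IsPeakDiagram.two_mem (hB : IsPeakDiagram k B) {i r t : ℕ}
    (h : (i, r) ∈ B) (ht1 : 1 ≤ t) (htr : t < r) : (2, t) ∈ B := by
  have h1t : (1, t) ∈ B := hB.down_closed h ht1 htr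
  have h1t1 : (1, t + 1) ∈ B := by
    rcases Nat.lt_or_ge (t + 1) r with hj | hj
    · exact hB.down_closed h (by omega) hj
    · have : r = t + 1 := by omega
      subst this
      exact hB.left_closed h (by omega) ((hB.2.1 _ _ h).1)
  exact hB.2.2.2.2 _ h1t h1t1

/-- A downward-closed finset of positive naturals is an initial interval. -/
theorem dcl_eq_Icc (A : Finset ℕ) (h1 : ∀ a ∈ A, 1 ≤ a)
    (h2 : ∀ a : ℕ, a + 2 ∈ A → a + 1 ∈ A) : A = Finset.Icc 1 A.card := by
  have hsub : A ⊆ Finset.Icc 1 A.card := by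
    intro a ha
    have hIcc : Finset.Icc 1 a ⊆ A := by
      intro b hb
      rw [Finset.mem_Icc] at hb
      obtain ⟨hb1, hb2⟩ := hb
      -- downward induction from a
      clear h1
      induction a with
      | zero => omega
      | succ a ih =>
        rcases Nat.lt_or_ge b (a + 1) with hlt | hge
        · have ha' : a ∈ A := by
            have h' : a - 1 + 2 ∈ A := by
              rw [(by omega : a - 1 + 2 = a + 1)]; exact ha
            have := h2 _ h'
            rwa [(by omega : a - 1 + 1 = a)] at this
          exact ih ha' (by omega)
        · have : b = a + 1 := by omega
          subst this; exact ha
    have : a = (Finset.Icc 1 a).card := by simp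
    rw [Finset.mem_Icc]
    exact ⟨h1 a ha, this ▸ Finset.card_le_card hIcc⟩
  exact Finset.eq_of_subset_of_card_le hsub (by simp)

/-- Criterion: existence of a peak composition with the given diagram. -/
theorem peakDiagram_iff (hk : 1 ≤ k) :
    (∃ δ : List ℕ, IsPeakComposition k δ ∧ B = cd δ) ↔ IsPeakDiagram k B := by
  constructor
  · rintro ⟨δ, ⟨⟨hpos, hsum⟩, hpeak⟩, rfl⟩
    refine ⟨by rw [card_cd, hsum], ?_, ?_, ?_, ?_⟩
    · intro i r h; rw [mem_cd] at h; exact ⟨h.1, h.2.1⟩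
    · intro i r h; rw [mem_cd] at h ⊢; exact ⟨by omega, h.2.1, h.2.2.1, by omega⟩
    · intro i r h; rw [mem_cd] at h ⊢
      refine ⟨le_refl 1, by omega, by omega, ?_⟩
      have : δ.getD (r + 1 - 1) 0 ∈ δ := by
        have : r + 1 - 1 < δ.length := by omega
        simp only [List.getD_eq_getElem?_getD, List.getElem?_eq_getElem this]
        exact List.getElem_mem _
      exact hpos _ this
    · intro r h h1; rw [mem_cd] at h h1 ⊢
      refine ⟨by omega, h.2.1, h.2.2.1, ?_⟩
      have := hpeak (r - 1) (by omega)
      simp only [part] at *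
      omega
  · rintro ⟨hcard, h2, h3, h4, h5⟩
    -- construct the composition from row counts
    have hBne : B.Nonempty := by
      rw [← Finset.card_pos, hcard]; omega
    set m := (B.image Prod.snd).sup id with hm
    have hmmem : ∃ i, (i, m) ∈ B := by
      obtain ⟨r, hr, hr2⟩ := Finset.exists_mem_eq_sup (B.image Prod.snd)
        (hBne.image _) id
      simp only [Finset.mem_image] at hr
      obtain ⟨p, hp, rfl⟩ := hr
      exact ⟨p.1, by rw [hm, hr2]; exact (Prod.mk.eta ▸ hp)⟩
    have hle_m : ∀ i r, (i, r) ∈ B → r ≤ m := by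
      intro i r h
      rw [hm]
      exact Finset.le_sup (f := id) (Finset.mem_image.2 ⟨(i, r), h, rfl⟩)
    -- row counts
    set cnt := fun r => (B.filter (fun p => p.2 = r)).card with hcnt
    -- the fiber at row r is an interval
    have hfiber : ∀ r, 1 ≤ r → (∀ i, (i, r) ∈ B ↔ 1 ≤ i ∧ i ≤ cnt r) := by
      intro r hr
      set A := (B.filter (fun p => p.2 = r)).image Prod.fst with hA
      have hAmem : ∀ i, i ∈ A ↔ (i, r) ∈ B := by
        intro i
        simp only [hA, Finset.mem_image, Finset.mem_filter]
        constructor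
        · rintro ⟨p, ⟨hp, hp2⟩, rfl⟩
          rwa [← hp2, Prod.mk.eta]
        · intro h; exact ⟨(i, r), ⟨h, rfl⟩, rfl⟩
      have hAcard : A.card = cnt r := by
        rw [hA, hcnt]
        apply Finset.card_image_of_injOn
        intro p hp q hq hpq
        simp only [Finset.mem_coe, Finset.mem_filter] at hp hq
        exact Prod.ext hpq (hp.2.trans hq.2.symm)
      have := dcl_eq_Icc A (fun a ha => (h2 _ _ ((hAmem a).1 ha)).1)
        (fun a ha => (hAmem _).2 (h3 _ _ ((hAmem _).1 ha)))
      intro i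
      rw [← hAmem, this, hAcard, Finset.mem_Icc]
    refine ⟨(List.range m).map (fun r0 => cnt (r0 + 1)), ⟨⟨?_, ?_⟩, ?_⟩, ?_⟩
    · -- positivity
      intro a ha
      simp only [List.mem_map, List.mem_range] at ha
      obtain ⟨r0, hr0, rfl⟩ := ha
      -- row r0+1 is nonempty
      obtain ⟨i, hi⟩ := hmmem
      have h1m : (1, r0 + 1) ∈ B := by
        rcases Nat.lt_or_ge (r0 + 1) m with h | h
        · exact IsPeakDiagram.down_closed ⟨hcard, h2, h3, h4, h5⟩ hi (by omega) h
        · have heq : r0 + 1 = m := by omega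
          rw [← heq] at hi
          exact IsPeakDiagram.left_closed ⟨hcard, h2, h3, h4, h5⟩ hi (by omega)
            (h2 _ _ hi).1
      have := (hfiber (r0 + 1) (by omega) 1).1 h1m
      omega
    · -- sum = k
      rw [← hcard]
      have : ∀ (M : ℕ), ((List.range M).map (fun r0 => cnt (r0 + 1))).sum
          = ∑ r ∈ Finset.Icc 1 M, cnt r := by
        intro M
        induction M with
        | zero => simp
        | succ M ih =>
          rw [List.range_succ, List.map_append, List.sum_append, ih]
          have : Finset.Icc 1 (M + 1) = insert (M + 1) (Finset.Icc 1 M) := by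
            ext x; simp [Finset.mem_Icc, Finset.mem_insert]; omega
          rw [this, Finset.sum_insert (by simp)]
          simp [Nat.add_comm]
      rw [this]
      rw [Finset.card_eq_sum_card_fiberwise (f := Prod.snd) (t := Finset.Icc 1 m)
        (fun p hp => by
          rw [Finset.mem_coe, Finset.mem_Icc]
          rw [Finset.mem_coe] at hp
          exact ⟨(h2 p.1 p.2 (Prod.mk.eta ▸ hp)).2, hle_m p.1 p.2 (Prod.mk.eta ▸ hp)⟩)]
    · -- peak condition
      intro i hi
      simp only [List.length_map, List.length_range] at hi
      rw [List.getD_eq_getElem?_getD, List.getElem?_eq_getElem (by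
        simp only [List.length_map, List.length_range]; omega)]
      simp only [List.getElem_map, List.getElem_range, Option.getD_some]
      -- row i+1 is not the top row: row i+2 is nonempty
      obtain ⟨itop, hitop⟩ := hmmem
      have hpd : IsPeakDiagram k B := ⟨hcard, h2, h3, h4, h5⟩
      have h2mem : (2, i + 1) ∈ B := hpd.two_mem hitop (by omega) (by omega)
      have := (hfiber (i + 1) (by omega) 2).1 h2mem
      omega
    · -- B = cd of this list
      ext ⟨i, r⟩
      rw [mem_cd]
      simp only [List.length_map, List.length_range]
      constructor
      · intro h
        have hr1 : 1 ≤ r := (h2 _ _ h).2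
        have hrm : r ≤ m := hle_m _ _ h
        have := (hfiber r hr1 i).1 h
        refine ⟨this.1, hr1, hrm, ?_⟩
        rw [part, List.getD_eq_getElem?_getD, List.getElem?_eq_getElem (by
          simp only [List.length_map, List.length_range]; omega)]
        simp only [List.getElem_map, List.getElem_range, Option.getD_some]
        have hre : r - 1 + 1 = r := by omega
        rw [hre]
        exact ((hfiber r hr1 i).1 h).2
      · rintro ⟨h1, hr1, hrm, hpart⟩
        rw [part, List.getD_eq_getElem?_getD, List.getElem?_eq_getElem (by
          simp only [List.length_map, List.length_range]; omega)] at hpart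
        simp only [List.getElem_map, List.getElem_range, Option.getD_some] at hpart
        have hreq : r - 1 + 1 = r := by omega
        rw [hreq] at hpart
        exact (hfiber r hr1 i).2 ⟨h1, hpart⟩

end Criterion
/-! ### The box bijection -/

/-- End of the maximal run of `S` starting at `s`. -/
noncomputable def eRun (S : Finset ℕ) (s : ℕ) : ℕ := sInf {u | s ≤ u ∧ u + 1 ∉ S}

/-- The map from boxes of `cd (deltaS α S)` to boxes of `cd α`. -/
def sig (α : List ℕ) (p : ℕ × ℕ) : ℕ × ℕ :=
  if p.1 ≤ part α p.2 then p else (3, p.2 + part α p.2 - p.1)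

/-- The inverse map from boxes of `cd α` to boxes of `cd (deltaS α S)`. -/
noncomputable def siginv (α : List ℕ) (S : Finset ℕ) (q : ℕ × ℕ) : ℕ × ℕ :=
  if q.1 = 3 ∧ q.2 ∈ S then
    (eRun S q.2 + 1 + part α (eRun S q.2 + 1) - q.2, eRun S q.2 + 1)
  else q

/-- The forward bijection on fillings. -/
def Phi (α : List ℕ) (S : Finset ℕ) (T : ℕ × ℕ → ℕ) (p : ℕ × ℕ) : ℕ :=
  if p ∈ cd (deltaS α S) then T (sig α p) else 0

/-- The backward bijection on fillings. -/
noncomputable def Psi (α : List ℕ) (S : Finset ℕ) (U : ℕ × ℕ → ℕ) (q : ℕ × ℕ) : ℕ :=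
  if q ∈ cd α then U (siginv α S q) else 0

section RunFacts
variable {S : Finset ℕ} {s t r : ℕ}

theorem eRun_set_nonempty (s : ℕ) : {u | s ≤ u ∧ u + 1 ∉ S}.Nonempty := by
  refine ⟨max s (S.sup id), le_max_left _ _, fun hmem => ?_⟩
  have := Finset.le_sup (f := id) hmem
  simp only [id] at this
  omega

theorem le_eRun : s ≤ eRun S s := (Nat.sInf_mem (eRun_set_nonempty s)).1

theorem eRun_succ_not_mem : eRun S s + 1 ∉ S := (Nat.sInf_mem (eRun_set_nonempty s)).2

theorem eRun_le {u : ℕ} (h1 : s ≤ u) (h2 : u + 1 ∉ S) : eRun S s ≤ u :=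
  Nat.sInf_le ⟨h1, h2⟩

theorem run_mem (hs : s ∈ S) (h1 : s ≤ t) (h2 : t ≤ eRun S s) : t ∈ S := by
  by_contra ht
  have h3 : s ≠ t := fun h => ht (h ▸ hs)
  have : eRun S s ≤ t - 1 := eRun_le (by omega) (by
    rw [(by omega : t - 1 + 1 = t)]; exact ht)
  omega

theorem eRun_eq_of_run (hs : s ∈ S) (h1 : s ≤ t) (h2 : t ≤ eRun S s) :
    eRun S t = eRun S s := by
  apply le_antisymm
  · exact eRun_le h2 eRun_succ_not_mem
  · by_contra h
    push_neg at h
    have h3 : eRun S t + 1 ∈ S :=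
      run_mem hs (by have := le_eRun (S := S) (s := t); omega) (by omega)
    exact eRun_succ_not_mem h3

/-- Largest element below `r` not in `S`. -/
def bLow (S : Finset ℕ) (r : ℕ) : ℕ := ((Finset.range r).filter (fun u => u ∉ S)).sup id

theorem runLen_eq : runLen S r = r - 1 - bLow S r := rfl

theorem bLow_spec (h0 : 0 ∉ S) (hr : 1 ≤ r) : bLow S r ∉ S ∧ bLow S r < r := by
  have hne : ((Finset.range r).filter (fun u => u ∉ S)).Nonempty :=
    ⟨0, by simp [Finset.mem_filter, Finset.mem_range, h0]; omega⟩
  obtain ⟨u, hu, hequ⟩ := Finset.exists_mem_eq_sup _ hne id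
  simp only [Finset.mem_filter, Finset.mem_range] at hu
  rw [bLow, hequ]
  exact ⟨hu.2, hu.1⟩

theorem le_bLow (h1 : t < r) (h2 : t ∉ S) : t ≤ bLow S r :=
  Finset.le_sup (f := id) (by simp [Finset.mem_filter, Finset.mem_range, h1, h2])

theorem mem_of_gt_bLow (h1 : bLow S r < t) (h2 : t < r) : t ∈ S := by
  by_contra h
  exact absurd (le_bLow h2 h) (by omega)

theorem bLow_lt_of_run (h0 : 0 ∉ S) (hs : s ∈ S) (hr : r = eRun S s + 1) :
    bLow S r < s := by
  have h1 : 1 ≤ s := Nat.pos_of_ne_zero (fun h => h0 (h ▸ hs))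
  have hse : s ≤ eRun S s := le_eRun
  have hsr : s < r := by omega
  rcases Nat.lt_or_ge (bLow S r) s with h | h
  · exact h
  · exfalso
    have hb := bLow_spec (r := r) h0 (by omega)
    have hble : bLow S r ≤ eRun S s := by omega
    exact hb.1 (run_mem hs h hble)

theorem runLen_of_run (h0 : 0 ∉ S) (hs : s ∈ S) :
    runLen S (eRun S s + 1) = eRun S s - bLow S (eRun S s + 1) := by
  rw [runLen_eq]; omega

end RunFacts

section PartBeta
variable {n : ℕ} {α : List ℕ} {S : Finset ℕ}

theorem length_deltaS : (deltaS α S).length = α.length := by simp [deltaS]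

theorem part_deltaS {r : ℕ} (h1 : 1 ≤ r) (h2 : r ≤ α.length) :
    part (deltaS α S) r = if r ∈ S then part α r - 1
      else if r - 1 ∈ S then part α r + runLen S r else part α r := by
  have hlt : r - 1 < α.length := by omega
  rw [part, deltaS, List.getD_eq_getElem?_getD, List.getElem?_eq_getElem (by simpa using hlt)]
  simp only [List.getElem_map, List.getElem_range, Option.getD_some]
  rw [(by omega : r - 1 + 1 = r)]

/-- Facts extracted from `S ⊆ Ialpha α`. -/
theorem S_facts (hS : S ⊆ Ialpha α) {s : ℕ} (hs : s ∈ S) :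
    1 ≤ s ∧ s + 1 ≤ α.length ∧ part α s = 3 ∧ part α (s + 1) ≠ 1 := by
  have := hS hs
  simp only [Ialpha, Finset.mem_filter, Finset.mem_Icc] at this
  obtain ⟨⟨h1, h2⟩, h3, h4⟩ := this
  have hlen : s - 1 < α.length := by
    by_contra h
    push_neg at h
    rw [part, List.getD_eq_default _ _ h] at h3
    omega
  exact ⟨h1, by omega, h3, h4⟩

theorem zero_not_mem_S (hS : S ⊆ Ialpha α) : 0 ∉ S := by
  intro h
  have := (S_facts hS h).1
  omega

end PartBeta
section BoxBij
variable {n : ℕ} {α : List ℕ} {S : Finset ℕ}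

theorem part_pos (hα : IsPeakComposition n α) {r : ℕ} (h1 : 1 ≤ r) (h2 : r ≤ α.length) :
    1 ≤ part α r := by
  have hlt : r - 1 < α.length := by omega
  have hmem : α.getD (r - 1) 0 ∈ α := by
    simp only [List.getD_eq_getElem?_getD, List.getElem?_eq_getElem hlt]
    exact List.getElem_mem _
  exact hα.1.1 _ hmem

theorem part_le3 (hparts : ∀ a ∈ α, a ≤ 3) {r : ℕ} (h2 : r ≤ α.length) (h1 : 1 ≤ r) :
    part α r ≤ 3 := by
  have hlt : r - 1 < α.length := by omega
  have hmem : α.getD (r - 1) 0 ∈ α := by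
    simp only [List.getD_eq_getElem?_getD, List.getElem?_eq_getElem hlt]
    exact List.getElem_mem _
  exact hparts _ hmem

theorem part_ge2 (hα : IsPeakComposition n α) {r : ℕ} (h1 : 1 ≤ r) (h2 : r + 1 ≤ α.length) :
    2 ≤ part α r := by
  have := hα.2 (r - 1) (by omega)
  rw [part]
  omega

/-- The second part of `S`-rows: `part α (s+1) ≥ 2`. -/
theorem part_succ_ge2 (hα : IsPeakComposition n α) (hS : S ⊆ Ialpha α) {s : ℕ} (hs : s ∈ S) :
    2 ≤ part α (s + 1) := by
  obtain ⟨h1, h2, h3, h4⟩ := S_facts hS hs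
  have := part_pos hα (r := s + 1) (by omega) h2
  omega

theorem run_subset_S (hS : S ⊆ Ialpha α) {s t : ℕ} (hs : s ∈ S) (h1 : s ≤ t)
    (h2 : t ≤ eRun S s) : t ∈ S := run_mem hs h1 h2

theorem eRun_mem (hS : S ⊆ Ialpha α) {s : ℕ} (hs : s ∈ S) : eRun S s ∈ S :=
  run_mem hs le_eRun (le_refl _)

/-- Characterization of a "moved" box of `cd (deltaS α S)`. -/
theorem moved_char (hα : IsPeakComposition n α) (hS : S ⊆ Ialpha α) {i r : ℕ}
    (hp : (i, r) ∈ cd (deltaS α S)) (hgt : part α r < i) :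
    r ∉ S ∧ r - 1 ∈ S ∧ 2 ≤ r ∧ r ≤ α.length ∧
    (r + part α r - i) ∈ S ∧ eRun S (r + part α r - i) = r - 1 ∧
    1 ≤ r + part α r - i ∧ r + part α r - i ≤ r - 1 ∧
    i ≤ part α r + runLen S r := by
  have h0 : (0 : ℕ) ∉ S := zero_not_mem_S hS
  rw [mem_cd, length_deltaS] at hp
  obtain ⟨hi1, hr1, hrL, hile⟩ := hp
  have hrS : r ∉ S := by
    intro h
    rw [part_deltaS hr1 hrL, if_pos h] at hile
    omega
  have hr1S : r - 1 ∈ S := by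
    by_contra h
    rw [part_deltaS hr1 hrL, if_neg hrS, if_neg h] at hile
    omega
  rw [part_deltaS hr1 hrL, if_neg hrS, if_pos hr1S] at hile
  have hr2 : 2 ≤ r := by
    rcases Nat.lt_or_ge r 2 with h | h
    · exfalso
      have hre : r = 1 := by omega
      subst hre
      exact h0 (by simpa using hr1S)
    · exact h
  have hb := bLow_spec (S := S) (r := r) h0 (by omega)
  have hrl : runLen S r = r - 1 - bLow S r := runLen_eq
  have hbr : bLow S r ≤ r - 2 := by
    rcases Nat.lt_or_ge (bLow S r) (r - 1) with h | h
    · omega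
    · exfalso
      have : bLow S r = r - 1 := by omega
      exact hb.1 (this ▸ hr1S)
  set s := r + part α r - i with hsdef
  have hs_gt : bLow S r < s := by omega
  have hs_lt : s ≤ r - 1 := by omega
  have hsS : s ∈ S := mem_of_gt_bLow hs_gt (by omega)
  have he : eRun S s = r - 1 := by
    apply le_antisymm
    · apply eRun_le hs_lt
      rw [(by omega : r - 1 + 1 = r)]
      exact hrS
    · by_contra h
      push_neg at h
      have hu := eRun_succ_not_mem (S := S) (s := s)
      have hle := le_eRun (S := S) (s := s)
      exact hu (mem_of_gt_bLow (r := r) (by omega) (by omega))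
  exact ⟨hrS, hr1S, hr2, hrL, hsS, he, by omega, hs_lt, hile⟩

/-- The target box of `(3, s)` for `s ∈ S`. -/
theorem target_mem (hα : IsPeakComposition n α) (hS : S ⊆ Ialpha α) {s : ℕ} (hs : s ∈ S) :
    (eRun S s + 1 + part α (eRun S s + 1) - s, eRun S s + 1) ∈ cd (deltaS α S) ∧
    part α (eRun S s + 1) < eRun S s + 1 + part α (eRun S s + 1) - s ∧
    eRun S s + 1 ≤ α.length ∧
    sig α (eRun S s + 1 + part α (eRun S s + 1) - s, eRun S s + 1) = (3, s) := by
  have h0 : (0 : ℕ) ∉ S := zero_not_mem_S hS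
  set e := eRun S s with he
  set r := e + 1 with hr
  have hse : s ≤ e := le_eRun
  have hs1 : 1 ≤ s := (S_facts hS hs).1
  have heS : e ∈ S := eRun_mem hS hs
  have hrL : r ≤ α.length := by
    have := (S_facts hS heS).2.1
    omega
  have hrS : r ∉ S := eRun_succ_not_mem
  have hr1S : r - 1 ∈ S := by rw [(by omega : r - 1 = e)]; exact heS
  have hbl : bLow S r < s := bLow_lt_of_run h0 hs hr
  have hrpos : 1 ≤ part α r := part_pos hα (by omega) hrL
  set c := r + part α r - s with hc
  have hcgt : part α r < c := by omega
  have hcle : c ≤ part α r + runLen S r := by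
    rw [runLen_eq]
    omega
  have hmem : (c, r) ∈ cd (deltaS α S) := by
    rw [mem_cd, length_deltaS]
    refine ⟨by omega, by omega, hrL, ?_⟩
    rw [part_deltaS (by omega) hrL, if_neg hrS, if_pos hr1S]
    exact hcle
  refine ⟨hmem, hcgt, hrL, ?_⟩
  rw [sig, if_neg (by simp only; omega)]
  simp only
  rw [Prod.ext_iff]
  constructor <;> simp <;> omega

theorem sig_maps (hα : IsPeakComposition n α) (hS : S ⊆ Ialpha α) {p : ℕ × ℕ}
    (hp : p ∈ cd (deltaS α S)) : sig α p ∈ cd α := by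
  obtain ⟨i, r⟩ := p
  rcases le_or_gt i (part α r) with h | h
  · rw [sig, if_pos h]
    rw [mem_cd, length_deltaS] at hp
    exact mem_cd.2 ⟨hp.1, hp.2.1, hp.2.2.1, h⟩
  · obtain ⟨-, -, -, hrL, hsS, -, hs1, hslt, -⟩ := moved_char hα hS hp h
    rw [sig, if_neg (by simp only; omega)]
    show (3, r + part α r - i) ∈ cd α
    exact mem_cd.2 ⟨by omega, hs1, by omega, by
      rw [(S_facts hS hsS).2.2.1]⟩

theorem siginv_maps (hα : IsPeakComposition n α) (hparts : ∀ a ∈ α, a ≤ 3)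
    (hS : S ⊆ Ialpha α) {q : ℕ × ℕ} (hq : q ∈ cd α) : siginv α S q ∈ cd (deltaS α S) := by
  obtain ⟨i, r⟩ := q
  rw [mem_cd] at hq
  obtain ⟨hi1, hr1, hrL, hile⟩ := hq
  by_cases hmv : i = 3 ∧ r ∈ S
  · rw [siginv, if_pos (by simpa using hmv)]
    exact (target_mem hα hS hmv.2).1
  · rw [siginv, if_neg (by simpa using hmv)]
    rw [mem_cd, length_deltaS]
    refine ⟨hi1, hr1, hrL, ?_⟩
    rw [part_deltaS hr1 hrL]
    by_cases hrS : r ∈ S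
    · rw [if_pos hrS]
      have h3 : part α r = 3 := (S_facts hS hrS).2.2.1
      have : i ≠ 3 := fun h => hmv ⟨h, hrS⟩
      omega
    · rw [if_neg hrS]
      by_cases h2 : r - 1 ∈ S
      · rw [if_pos h2]; omega
      · rw [if_neg h2]; exact hile

theorem sig_siginv (hα : IsPeakComposition n α) (hS : S ⊆ Ialpha α) {q : ℕ × ℕ}
    (hq : q ∈ cd α) : sig α (siginv α S q) = q := by
  obtain ⟨i, r⟩ := q
  rw [mem_cd] at hq
  obtain ⟨hi1, hr1, hrL, hile⟩ := hq
  by_cases hmv : i = 3 ∧ r ∈ S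
  · rw [siginv, if_pos (by simpa using hmv)]
    have := (target_mem hα hS hmv.2).2.2.2
    rw [this, hmv.1]
  · rw [siginv, if_neg (by simpa using hmv)]
    rw [sig, if_pos (by simpa using hile)]

theorem siginv_sig (hα : IsPeakComposition n α) (hS : S ⊆ Ialpha α) {p : ℕ × ℕ}
    (hp : p ∈ cd (deltaS α S)) : siginv α S (sig α p) = p := by
  obtain ⟨i, r⟩ := p
  rcases le_or_gt i (part α r) with h | h
  · rw [sig, if_pos h, siginv]
    rw [mem_cd, length_deltaS] at hp
    obtain ⟨hi1, hr1, hrL, hile⟩ := hp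
    rw [if_neg]
    simp only [not_and]
    intro h3
    intro hrS
    rw [part_deltaS hr1 hrL, if_pos hrS] at hile
    have : part α r = 3 := (S_facts hS hrS).2.2.1
    omega
  · obtain ⟨hrS, hr1S, hr2, hrL, hsS, he, hs1, hslt, hiub⟩ := moved_char hα hS hp h
    rw [sig, if_neg (by simp only; omega)]
    rw [siginv, if_pos (by simpa using hsS)]
    simp only
    rw [he]
    rw [Prod.ext_iff]
    have hrw : r - 1 + 1 = r := by omega
    constructor
    · simp only [hrw]
      rw [mem_cd, length_deltaS] at hp
      omega
    · simp only [hrw]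

theorem sum_deltaS (hα : IsPeakComposition n α) (hparts : ∀ a ∈ α, a ≤ 3)
    (hS : S ⊆ Ialpha α) : (deltaS α S).sum = α.sum := by
  rw [← card_cd, ← card_cd]
  apply Finset.card_nbij' (i := fun p => sig α p) (j := fun q => siginv α S q)
  · intro p hp; exact sig_maps hα hS hp
  · intro q hq; exact siginv_maps hα hparts hS hq
  · intro p hp; exact siginv_sig hα hS hp
  · intro q hq; exact sig_siginv hα hS hq

end BoxBij
section FunLemmas
variable {n : ℕ} {α : List ℕ} {S : Finset ℕ} {T U : ℕ × ℕ → ℕ}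

theorem Phi_val {p : ℕ × ℕ} (hp : p ∈ cd (deltaS α S)) :
    Phi α S T p = T (sig α p) := if_pos hp

theorem Phi_zero {p : ℕ × ℕ} (hp : p ∉ cd (deltaS α S)) : Phi α S T p = 0 := if_neg hp

theorem Psi_val {q : ℕ × ℕ} (hq : q ∈ cd α) : Psi α S U q = U (siginv α S q) := if_pos hq

theorem Psi_zero {q : ℕ × ℕ} (hq : q ∉ cd α) : Psi α S U q = 0 := if_neg hq

theorem Psi_Phi (hα : IsPeakComposition n α) (hparts : ∀ a ∈ α, a ≤ 3)
    (hS : S ⊆ Ialpha α) (hT0 : ∀ p, p ∉ cd α → T p = 0) :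
    Psi α S (Phi α S T) = T := by
  funext q
  by_cases hq : q ∈ cd α
  · rw [Psi_val hq, Phi_val (siginv_maps hα hparts hS hq), sig_siginv hα hS hq]
  · rw [Psi_zero hq, hT0 q hq]

theorem Phi_Psi (hα : IsPeakComposition n α) (hparts : ∀ a ∈ α, a ≤ 3)
    (hS : S ⊆ Ialpha α) (hU0 : ∀ p, p ∉ cd (deltaS α S) → U p = 0) :
    Phi α S (Psi α S U) = U := by
  funext p
  by_cases hp : p ∈ cd (deltaS α S)
  · rw [Phi_val hp, Psi_val (sig_maps hα hS hp), siginv_sig hα hS hp]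
  · rw [Phi_zero hp, hU0 p hp]

theorem sig_bijOn (hα : IsPeakComposition n α) (hparts : ∀ a ∈ α, a ≤ 3)
    (hS : S ⊆ Ialpha α) :
    Set.BijOn (sig α) (cd (deltaS α S) : Set (ℕ × ℕ)) (cd α : Set (ℕ × ℕ)) := by
  refine ⟨fun p hp => sig_maps hα hS hp, ?_, ?_⟩
  · intro p hp p' hp' heq
    rw [← siginv_sig hα hS hp, heq, siginv_sig hα hS hp']
  · intro q hq
    exact ⟨siginv α S q, siginv_maps hα hparts hS hq, sig_siginv hα hS hq⟩

theorem siginv_bijOn (hα : IsPeakComposition n α) (hparts : ∀ a ∈ α, a ≤ 3)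
    (hS : S ⊆ Ialpha α) :
    Set.BijOn (siginv α S) (cd α : Set (ℕ × ℕ)) (cd (deltaS α S) : Set (ℕ × ℕ)) := by
  refine ⟨fun q hq => siginv_maps hα hparts hS hq, ?_, ?_⟩
  · intro q hq q' hq' heq
    rw [← sig_siginv hα hS hq, heq, sig_siginv hα hS hq']
  · intro p hp
    exact ⟨sig α p, sig_maps hα hS hp, siginv_sig hα hS hp⟩

theorem standard_Phi (hα : IsPeakComposition n α) (hparts : ∀ a ∈ α, a ≤ 3)
    (hS : S ⊆ Ialpha α) (hstd : IsStandardFilling α T) :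
    IsStandardFilling (deltaS α S) (Phi α S T) := by
  constructor
  · rw [sum_deltaS hα hparts hS]
    have := hstd.1.comp (sig_bijOn hα hparts hS)
    exact this.congr (fun p hp => (Phi_val hp).symm)
  · intro p hp; exact Phi_zero hp

theorem standard_Psi (hα : IsPeakComposition n α) (hparts : ∀ a ∈ α, a ≤ 3)
    (hS : S ⊆ Ialpha α) (hstd : IsStandardFilling (deltaS α S) U) :
    IsStandardFilling α (Psi α S U) := by
  constructor
  · have h := hstd.1.comp (siginv_bijOn hα hparts hS)
    rw [sum_deltaS hα hparts hS] at h
    exact h.congr (fun q hq => (Psi_val hq).symm)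
  · intro q hq; exact Psi_zero hq

/-- Entries strictly increase along a row. -/
theorem rowLt {γ : List ℕ} {T : ℕ × ℕ → ℕ} (hrow : RowsIncrease γ T) {i i' r : ℕ}
    (h : (i, r) ∈ cd γ) (h' : (i', r) ∈ cd γ) (hii : i < i') : T (i, r) < T (i', r) := by
  obtain ⟨d, rfl⟩ : ∃ d, i' = i + d + 1 := ⟨i' - i - 1, by omega⟩
  clear hii
  revert h'
  induction d with
  | zero => intro h'; exact hrow i r h h'
  | succ d ih =>
    intro h'
    have hmem : (i + d + 1, r) ∈ cd γ := by
      rw [mem_cd] at h h' ⊢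
      exact ⟨by omega, h.2.1, h.2.2.1, by omega⟩
    exact lt_trans (ih hmem) (hrow (i + d + 1) r hmem h')

theorem rowLe {γ : List ℕ} {T : ℕ × ℕ → ℕ} (hrow : RowsIncrease γ T) {i i' r : ℕ}
    (h : (i, r) ∈ cd γ) (h' : (i', r) ∈ cd γ) (hii : i ≤ i') : T (i, r) ≤ T (i', r) := by
  rcases Nat.lt_or_ge i i' with h1 | h1
  · exact le_of_lt (rowLt hrow h h' h1)
  · have : i = i' := by omega
    subst this; exact le_refl _

/-- Step of the decreasing chain of third entries along a run. -/
theorem x_step (hS : S ⊆ Ialpha α)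
    (hA : ∀ s ∈ S, T (part α (s + 1), s + 1) < T (part α s, s)) {u : ℕ}
    (hu : u ∈ S) (hu1 : u + 1 ∈ S) : T (3, u + 1) < T (3, u) := by
  have h1 := (S_facts hS hu).2.2.1
  have h2 := (S_facts hS hu1).2.2.1
  have := hA u hu
  rwa [h1, h2] at this

theorem x_chain (hS : S ⊆ Ialpha α)
    (hA : ∀ s ∈ S, T (part α (s + 1), s + 1) < T (part α s, s)) {s t : ℕ}
    (hs : s ∈ S) (hle : s ≤ t) (hte : t ≤ eRun S s) : T (3, t) ≤ T (3, s) := by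
  induction t with
  | zero =>
    have : s = 0 := by omega
    subst this; exact le_refl _
  | succ t ih =>
    rcases Nat.lt_or_ge s (t + 1) with h1 | h1
    · have htS : t ∈ S := run_mem hs (by omega) (by omega)
      have ht1S : t + 1 ∈ S := run_mem hs (by omega) hte
      exact le_trans (le_of_lt (x_step hS hA htS ht1S)) (ih (by omega) (by omega))
    · have : s = t + 1 := by omega
      subst this; exact le_refl _

theorem x_chain_lt (hS : S ⊆ Ialpha α)
    (hA : ∀ s ∈ S, T (part α (s + 1), s + 1) < T (part α s, s)) {s t : ℕ}
    (hs : s ∈ S) (hle : s < t) (hte : t ≤ eRun S s) : T (3, t) < T (3, s) := by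
  have htS : t ∈ S := run_mem hs (by omega) hte
  have ht1 : t - 1 ∈ S := run_mem hs (by omega) (by omega)
  have hstep : T (3, t) < T (3, t - 1) := by
    have := x_step hS hA ht1 (by rw [(by omega : t - 1 + 1 = t)]; exact htS)
    rwa [(by omega : t - 1 + 1 = t)] at this
  calc T (3, t) < T (3, t - 1) := hstep
    _ ≤ T (3, s) := x_chain hS hA hs (by omega) (by omega)

end FunLemmas
section Forward
variable {n : ℕ} {α : List ℕ} {S : Finset ℕ} {T : ℕ × ℕ → ℕ}

theorem part_deltaS_pos (hα : IsPeakComposition n α) (hS : S ⊆ Ialpha α) {r : ℕ}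
    (h1 : 1 ≤ r) (h2 : r ≤ α.length) : 1 ≤ part (deltaS α S) r := by
  rw [part_deltaS h1 h2]
  by_cases hrS : r ∈ S
  · rw [if_pos hrS, (S_facts hS hrS).2.2.1]; omega
  · rw [if_neg hrS]
    have := part_pos hα h1 h2
    by_cases h3 : r - 1 ∈ S
    · rw [if_pos h3]; omega
    · rw [if_neg h3]; omega

theorem part_deltaS_ge2 (hα : IsPeakComposition n α) (hS : S ⊆ Ialpha α) {r : ℕ}
    (h1 : 1 ≤ r) (h2 : r + 1 ≤ α.length) : 2 ≤ part (deltaS α S) r := by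
  rw [part_deltaS h1 (by omega)]
  by_cases hrS : r ∈ S
  · rw [if_pos hrS, (S_facts hS hrS).2.2.1]
  · rw [if_neg hrS]
    have := part_ge2 hα h1 h2
    by_cases h3 : r - 1 ∈ S
    · rw [if_pos h3]; omega
    · rw [if_neg h3]; omega

/-- `sig` fixes boxes whose column is at most `part α r`. -/
theorem sig_fix {i r : ℕ} (h : i ≤ part α r) : sig α (i, r) = (i, r) := if_pos h

theorem sig_move {i r : ℕ} (h : part α r < i) :
    sig α (i, r) = (3, r + part α r - i) := by
  rw [sig, if_neg (by simp only; omega)]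

theorem rows_Phi (hα : IsPeakComposition n α) (hparts : ∀ a ∈ α, a ≤ 3)
    (hS : S ⊆ Ialpha α) (hrow : RowsIncrease α T)
    (hA : ∀ s ∈ S, T (part α (s + 1), s + 1) < T (part α s, s)) :
    RowsIncrease (deltaS α S) (Phi α S T) := by
  intro i r h h1
  rw [Phi_val h, Phi_val h1]
  have hb := mem_cd.1 h
  have hb1 := mem_cd.1 h1
  rw [length_deltaS] at hb hb1
  rcases Nat.lt_or_ge (part α r) (i + 1) with hgt | hle
  · -- the box (i+1, r) is moved
    obtain ⟨hrS, hr1S, hr2, hrL, hsS, he, hs1, hslt, hiub⟩ :=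
      moved_char hα hS h1 hgt
    rw [sig_move hgt]
    rcases Nat.lt_or_ge (part α r) i with hgt2 | hle2
    · -- both boxes moved
      obtain ⟨-, -, -, -, hsS2, -, hs12, hslt2, -⟩ :=
        moved_char hα hS h hgt2
      rw [sig_move hgt2]
      have hstep := x_step hS hA (u := r + part α r - (i + 1)) hsS (by
        rw [(by omega : r + part α r - (i + 1) + 1 = r + part α r - i)]
        exact hsS2)
      rwa [(by omega : r + part α r - (i + 1) + 1 = r + part α r - i)] at hstep
    · -- (i, r) unmoved, i = part α r
      have hieq : i = part α r := by omega
      rw [sig_fix hle2]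
      have hseq : r + part α r - (i + 1) = r - 1 := by omega
      rw [hseq]
      have hAr := hA (r - 1) hr1S
      rw [(by omega : r - 1 + 1 = r), (S_facts hS hr1S).2.2.1] at hAr
      rw [hieq]
      exact hAr
  · -- both unmoved
    rw [sig_fix (by omega), sig_fix hle]
    have hcd : (i, r) ∈ cd α := mem_cd.2 ⟨hb.1, hb.2.1, hb.2.2.1, by omega⟩
    have hcd1 : (i + 1, r) ∈ cd α := mem_cd.2 ⟨by omega, hb.2.1, hb.2.2.1, hle⟩
    exact hrow i r hcd hcd1

theorem cols_Phi (hα : IsPeakComposition n α) (hS : S ⊆ Ialpha α)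
    (hcol : FirstColIncreases α T) :
    FirstColIncreases (deltaS α S) (Phi α S T) := by
  intro r h h1
  rw [Phi_val h, Phi_val h1]
  have hb := mem_cd.1 h
  have hb1 := mem_cd.1 h1
  rw [length_deltaS] at hb hb1
  have hp1 : (1 : ℕ) ≤ part α r := part_pos hα hb.2.1 hb.2.2.1
  have hp2 : (1 : ℕ) ≤ part α (r + 1) := part_pos hα (by omega) hb1.2.2.1
  rw [sig_fix hp1, sig_fix hp2]
  exact hcol r (mem_cd.2 ⟨le_refl _, hb.2.1, hb.2.2.1, hp1⟩)
    (mem_cd.2 ⟨le_refl _, by omega, hb1.2.2.1, hp2⟩)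

theorem peak_Phi (hα : IsPeakComposition n α) (hparts : ∀ a ∈ α, a ≤ 3)
    (hS : S ⊆ Ialpha α) (hrow : RowsIncrease α T)
    (hA : ∀ s ∈ S, T (part α (s + 1), s + 1) < T (part α s, s))
    (hpeak : PeakCond α T) :
    PeakCond (deltaS α S) (Phi α S T) := by
  intro k hk1 hk2
  rw [sum_deltaS hα hparts hS] at hk2
  obtain ⟨δ, hδ, hcdeq⟩ := hpeak k hk1 hk2
  have hD : IsPeakDiagram k ((cd α).filter (fun p => T p ≤ k)) :=
    (peakDiagram_iff hk1).1 ⟨δ, hδ, hcdeq⟩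
  set D := (cd α).filter (fun p => T p ≤ k) with hDdef
  have hDmem : ∀ q : ℕ × ℕ, q ∈ D ↔ q ∈ cd α ∧ T q ≤ k := by
    intro q; simp [hDdef, Finset.mem_filter]
  rw [peakDiagram_iff hk1]
  set B := (cd (deltaS α S)).filter (fun p => Phi α S T p ≤ k) with hBdef
  have hBmem : ∀ p : ℕ × ℕ, p ∈ B ↔ p ∈ cd (deltaS α S) ∧ T (sig α p) ≤ k := by
    intro p
    simp only [hBdef, Finset.mem_filter, and_congr_right_iff]
    intro hp
    rw [Phi_val hp]
  refine ⟨?_, ?_, ?_, ?_, ?_⟩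
  · -- cardinality
    rw [← hD.1]
    apply Finset.card_nbij' (i := fun p => sig α p) (j := fun q => siginv α S q)
    · intro p hp
      rw [Finset.mem_coe, hBmem] at hp
      rw [Finset.mem_coe, hDmem]
      exact ⟨sig_maps hα hS hp.1, hp.2⟩
    · intro q hq
      rw [Finset.mem_coe, hDmem] at hq
      rw [Finset.mem_coe, hBmem]
      refine ⟨siginv_maps hα hparts hS hq.1, ?_⟩
      rw [sig_siginv hα hS hq.1]
      exact hq.2
    · intro p hp
      rw [Finset.mem_coe, hBmem] at hp
      exact siginv_sig hα hS hp.1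
    · intro q hq
      rw [Finset.mem_coe, hDmem] at hq
      exact sig_siginv hα hS hq.1
  · intro i r hir
    rw [hBmem] at hir
    have := mem_cd.1 hir.1
    exact ⟨this.1, this.2.1⟩
  · -- left-closedness
    intro i r hir
    rw [hBmem] at hir ⊢
    obtain ⟨hcd, hval⟩ := hir
    have hb := mem_cd.1 hcd
    rw [length_deltaS] at hb
    have hcd1 : (i + 1, r) ∈ cd (deltaS α S) := by
      rw [mem_cd, length_deltaS]
      exact ⟨by omega, hb.2.1, hb.2.2.1, by omega⟩
    refine ⟨hcd1, ?_⟩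
    rcases Nat.lt_or_ge (part α r) (i + 1) with hgt | hle
    · -- (i+1, r) moved
      obtain ⟨hrS, hr1S, hr2, hrL, hsS, he, hs1, hslt, hiub⟩ :=
        moved_char hα hS hcd1 hgt
      rcases Nat.lt_or_ge (part α r) (i + 2) with hgt2 | hle2
      · -- (i+2, r) also moved (always true here)
        obtain ⟨-, -, -, -, hsS2, -, hs12, hslt2, -⟩ :=
          moved_char hα hS hcd hgt2
        rw [sig_move hgt2] at hval
        rw [sig_move hgt]
        have hstep := x_step hS hA (u := r + part α r - (i + 2)) hsS2 (by
          rw [(by omega : r + part α r - (i + 2) + 1 = r + part α r - (i + 1))]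
          exact hsS)
        rw [(by omega : r + part α r - (i + 2) + 1 = r + part α r - (i + 1))] at hstep
        omega
      · omega
    · -- (i+1, r) unmoved
      rw [sig_fix hle]
      rcases Nat.lt_or_ge (part α r) (i + 2) with hgt2 | hle2
      · -- (i+2, r) moved, i+1 = part α r
        obtain ⟨hrS, hr1S, hr2, hrL, hsS, he, hs1, hslt, hiub⟩ :=
          moved_char hα hS hcd hgt2
        rw [sig_move hgt2] at hval
        have hseq : r + part α r - (i + 2) = r - 1 := by omega
        rw [hseq] at hval
        have hAr := hA (r - 1) hr1S
        rw [(by omega : r - 1 + 1 = r), (S_facts hS hr1S).2.2.1] at hAr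
        have hieq : i + 1 = part α r := by omega
        rw [hieq]
        omega
      · -- both unmoved
        rw [sig_fix hle2] at hval
        have hcdα : (i + 2, r) ∈ cd α := mem_cd.2 ⟨by omega, hb.2.1, hb.2.2.1, hle2⟩
        have hcdα1 : (i + 1, r) ∈ cd α := mem_cd.2 ⟨by omega, hb.2.1, hb.2.2.1, hle⟩
        have h' : T (i + 1, r) < T (i + 2, r) := hrow (i + 1) r hcdα1 hcdα
        omega
  · -- downward closedness
    intro i r hir
    rw [hBmem] at hir ⊢
    obtain ⟨hcd, hval⟩ := hir
    have hb := mem_cd.1 hcd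
    rw [length_deltaS] at hb
    have hcd1 : (1, r + 1) ∈ cd (deltaS α S) := by
      rw [mem_cd, length_deltaS]
      exact ⟨le_refl _, by omega, by omega, part_deltaS_pos hα hS (by omega) (by omega)⟩
    refine ⟨hcd1, ?_⟩
    have hp1 : (1 : ℕ) ≤ part α (r + 1) := part_pos hα (by omega) (by omega)
    rw [sig_fix hp1]
    rcases Nat.lt_or_ge (part α (r + 2)) i with hgt | hle
    · -- (i, r+2) moved: sig = (3, s), eRun s = r+1
      obtain ⟨hrS, hr1S, hr2, hrL, hsS, he, hs1, hslt, hiub⟩ :=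
        moved_char hα hS hcd hgt
      rw [sig_move hgt] at hval
      set s := r + 2 + part α (r + 2) - i with hsdef
      have hr1mem : r + 1 ∈ S := by
        rw [(by omega : r + 1 = r + 2 - 1)]; exact hr1S
      have h3r1 : (3, r + 1) ∈ cd α :=
        mem_cd.2 ⟨by omega, by omega, by omega, by rw [(S_facts hS hr1mem).2.2.1]⟩
      have h1r1 : (1, r + 1) ∈ cd α := mem_cd.2 ⟨le_refl _, by omega, by omega, hp1⟩
      have hlt1 : T (1, r + 1) < T (3, r + 1) := rowLt hrow h1r1 h3r1 (by omega)
      have hle2 : T (3, r + 1) ≤ T (3, s) := x_chain hS hA hsS (by omega) (by omega)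
      omega
    · -- unmoved: use peak diagram of T
      rw [sig_fix hle] at hval
      have hcdα : (i, r + 2) ∈ cd α := by
        rw [mem_cd]
        rw [mem_cd, length_deltaS] at hcd1
        refine ⟨hb.1, by omega, hb.2.2.1, hle⟩
      have hmemD : (i, r + 2) ∈ D := (hDmem _).2 ⟨hcdα, hval⟩
      have := hD.2.2.2.1 i r hmemD
      rw [hDmem] at this
      exact this.2
  · -- peak width condition
    intro r h1r h1r1
    rw [hBmem] at h1r h1r1 ⊢
    obtain ⟨hcd1, hval1⟩ := h1r
    obtain ⟨hcd2, hval2⟩ := h1r1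
    have hb1 := mem_cd.1 hcd1
    have hb2 := mem_cd.1 hcd2
    rw [length_deltaS] at hb1 hb2
    have hp1 : (1 : ℕ) ≤ part α r := part_pos hα hb1.2.1 hb1.2.2.1
    have hp2 : (1 : ℕ) ≤ part α (r + 1) := part_pos hα (by omega) hb2.2.2.1
    have hpge2 : 2 ≤ part α r := part_ge2 hα hb1.2.1 hb2.2.2.1
    rw [sig_fix hp1] at hval1
    rw [sig_fix hp2] at hval2
    have hcd2' : (2, r) ∈ cd (deltaS α S) := by
      rw [mem_cd, length_deltaS]
      exact ⟨by omega, hb1.2.1, hb1.2.2.1, part_deltaS_ge2 hα hS hb1.2.1 hb2.2.2.1⟩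
    refine ⟨hcd2', ?_⟩
    rw [sig_fix hpge2]
    have hD1 : (1, r) ∈ D := (hDmem _).2
      ⟨mem_cd.2 ⟨le_refl _, hb1.2.1, hb1.2.2.1, hp1⟩, hval1⟩
    have hD2 : (1, r + 1) ∈ D := (hDmem _).2
      ⟨mem_cd.2 ⟨le_refl _, by omega, hb2.2.2.1, hp2⟩, hval2⟩
    have := hD.2.2.2.2 r hD1 hD2
    rw [hDmem] at this
    exact this.2

end Forward
section Descents
variable {n : ℕ} {α : List ℕ} {S : Finset ℕ} {T : ℕ × ℕ → ℕ}

theorem siginv_moved {s : ℕ} (hs : s ∈ S) :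
    siginv α S (3, s) = (eRun S s + 1 + part α (eRun S s + 1) - s, eRun S s + 1) := by
  rw [siginv, if_pos (by exact ⟨rfl, hs⟩)]

theorem siginv_unmoved {q : ℕ × ℕ} (h : ¬(q.1 = 3 ∧ q.2 ∈ S)) : siginv α S q = q :=
  if_neg h

theorem row3_mem (hS : S ⊆ Ialpha α) {s i : ℕ} (hs : s ∈ S) (h1 : 1 ≤ i) (h3 : i ≤ 3) :
    (i, s) ∈ cd α := by
  obtain ⟨hs1, hsL, hp3, -⟩ := S_facts hS hs
  exact mem_cd.2 ⟨h1, hs1, by omega, by omega⟩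

/-- The key non-adjacency fact: `T (3, s) ≠ T (2, s) + 1`, via the peak condition. -/
theorem K2 (hα : IsPeakComposition n α) (hparts : ∀ a ∈ α, a ≤ 3) (hS : S ⊆ Ialpha α)
    (hstd : IsStandardFilling α T) (hrow : RowsIncrease α T)
    (hA : ∀ s ∈ S, T (part α (s + 1), s + 1) < T (part α s, s))
    (hpeak : PeakCond α T) {s : ℕ} (hs : s ∈ S) : T (3, s) ≠ T (2, s) + 1 := by
  intro hx
  obtain ⟨hs1, hsL, hp3, -⟩ := S_facts hS hs
  have h2s : (2, s) ∈ cd α := row3_mem hS hs (by omega) (by omega)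
  have h1s : (1, s) ∈ cd α := row3_mem hS hs (by omega) (by omega)
  have h3s : (3, s) ∈ cd α := row3_mem hS hs (by omega) (by omega)
  have hp1 : 2 ≤ part α (s + 1) := part_succ_ge2 hα hS hs
  have hlast : (part α (s + 1), s + 1) ∈ cd α := mem_cd.2 ⟨by omega, by omega, hsL, le_refl _⟩
  have h2s1 : (2, s + 1) ∈ cd α := mem_cd.2 ⟨by omega, by omega, hsL, hp1⟩
  set b := T (2, s) with hb
  set c := T (part α (s + 1), s + 1) with hc
  have hcb : c < b + 1 := by
    have := hA s hs
    rw [hp3] at this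
    omega
  have hcneb : c ≠ b := by
    intro h
    have := hstd.1.injOn hlast h2s (by rw [← hc, ← hb, h])
    rw [Prod.ext_iff] at this
    simp only at this
    omega
  have hb1 : 1 ≤ T (1, s) := by
    have := hstd.1.mapsTo h1s
    rw [Set.mem_Icc] at this
    exact this.1
  have h1lt2 : T (1, s) < b := hrow 1 s h1s h2s
  have hbn : b ≤ α.sum := by
    have := hstd.1.mapsTo h2s
    rw [Set.mem_Icc] at this
    exact this.2
  obtain ⟨δ, hδ, hcdeq⟩ := hpeak (b - 1) (by omega) (by omega)
  have hD : IsPeakDiagram (b - 1) ((cd α).filter (fun p => T p ≤ b - 1)) :=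
    (peakDiagram_iff (by omega)).1 ⟨δ, hδ, hcdeq⟩
  have hT2s1 : T (2, s + 1) ≤ b - 1 := by
    have hle : T (2, s + 1) ≤ c := rowLe hrow h2s1 hlast hp1
    omega
  have hmem1 : (2, s + 1) ∈ (cd α).filter (fun p => T p ≤ b - 1) :=
    Finset.mem_filter.2 ⟨h2s1, hT2s1⟩
  have hmem2 := hD.two_mem (t := s) hmem1 (by omega) (by omega)
  have := (Finset.mem_filter.1 hmem2).2
  omega

/-- Values in the flip zone are far from `x_s`. -/
theorem flip_zone_lt (hα : IsPeakComposition n α) (hS : S ⊆ Ialpha α)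
    (hrow : RowsIncrease α T)
    (hA : ∀ s ∈ S, T (part α (s + 1), s + 1) < T (part α s, s))
    {s t i : ℕ} (hs : s ∈ S) (hst : s ≤ t) (hte : t ≤ eRun S s)
    (hi1 : 1 ≤ i) (hi2 : i ≤ 2) : T (i, t) < T (3, s) := by
  have htS : t ∈ S := run_mem hs hst hte
  have hit : (i, t) ∈ cd α := row3_mem hS htS hi1 (by omega)
  have h3t : (3, t) ∈ cd α := row3_mem hS htS (by omega) (le_refl _)
  have h1 : T (i, t) < T (3, t) := rowLt hrow hit h3t (by omega)
  have h2 : T (3, t) ≤ T (3, s) := x_chain hS hA hs hst hte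
  omega

theorem eRun_cases {s t : ℕ} (hs : s ∈ S) (ht : t ∈ S) (hts : t < s) :
    eRun S t = eRun S s ∨ eRun S t < s := by
  rcases Nat.lt_or_ge (eRun S t) s with h | h
  · right; exact h
  · left
    exact (eRun_eq_of_run ht (by omega) h).symm

/-- Bundled facts about a moved box. -/
theorem moved_box_facts (hα : IsPeakComposition n α) (hS : S ⊆ Ialpha α) {s : ℕ}
    (hs : s ∈ S) :
    s ≤ eRun S s ∧ eRun S s + 1 ≤ α.length ∧
    part α (eRun S s + 1) < eRun S s + 1 + part α (eRun S s + 1) - s := by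
  obtain ⟨-, hcgt, hrL, -⟩ := target_mem hα hS hs
  exact ⟨le_eRun, hrL, hcgt⟩

theorem flip_zone_lt' (hα : IsPeakComposition n α) (hS : S ⊆ Ialpha α)
    (hrow : RowsIncrease α T)
    (hA : ∀ s ∈ S, T (part α (s + 1), s + 1) < T (part α s, s))
    {s t i : ℕ} (hs : s ∈ S) (hst : s < t) (hte : t ≤ eRun S s)
    (hi1 : 1 ≤ i) (hi2 : i ≤ 2) : T (i, t) + 1 < T (3, s) := by
  have htS : t ∈ S := run_mem hs (by omega) hte
  have hit : (i, t) ∈ cd α := row3_mem hS htS hi1 (by omega)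
  have h3t : (3, t) ∈ cd α := row3_mem hS htS (by omega) (le_refl _)
  have h1 : T (i, t) < T (3, t) := rowLt hrow hit h3t (by omega)
  have h2 : T (3, t) < T (3, s) := x_chain_lt hS hA hs hst hte
  omega

theorem siginv_readlt (hα : IsPeakComposition n α) (hparts : ∀ a ∈ α, a ≤ 3)
    (hS : S ⊆ Ialpha α) (hstd : IsStandardFilling α T) (hrow : RowsIncrease α T)
    (hA : ∀ s ∈ S, T (part α (s + 1), s + 1) < T (part α s, s))
    (hpeak : PeakCond α T) {p q : ℕ × ℕ} (hp : p ∈ cd α) (hq : q ∈ cd α)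
    (hval : T q = T p + 1) (hlt : readlt q p) :
    readlt (siginv α S q) (siginv α S p) := by
  obtain ⟨i, t⟩ := p
  obtain ⟨j, u⟩ := q
  have hpcd := mem_cd.1 hp
  have hqcd := mem_cd.1 hq
  have h3t : part α t ≤ 3 := part_le3 hparts hpcd.2.2.1 hpcd.2.1
  have h3u : part α u ≤ 3 := part_le3 hparts hqcd.2.2.1 hqcd.2.1
  by_cases hpm : i = 3 ∧ t ∈ S
  · obtain ⟨rfl, htS⟩ := hpm
    obtain ⟨hte, htL, htc⟩ := moved_box_facts hα hS htS
    rw [siginv_moved htS]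
    by_cases hqm : j = 3 ∧ u ∈ S
    · -- both moved, hlt gives t < u
      obtain ⟨rfl, huS⟩ := hqm
      obtain ⟨hue, huL, huc⟩ := moved_box_facts hα hS huS
      rw [siginv_moved huS]
      have htu : t < u := by
        rcases hlt with h | h
        · exact h
        · exfalso
          have h1 : (3 : ℕ) < 3 := h.2
          omega
      rcases eRun_cases huS htS htu with he | he
      · right
        refine ⟨?_, ?_⟩
        · show eRun S u + 1 = eRun S t + 1
          omega
        · show eRun S u + 1 + part α (eRun S u + 1) - u <
            eRun S t + 1 + part α (eRun S t + 1) - t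
          rw [he]
          omega
      · left
        show eRun S t + 1 < eRun S u + 1
        omega
    · -- q unmoved, value T (j, u) = T (3, t) + 1
      rw [siginv_unmoved (q := (j, u)) hqm]
      rcases hlt with h | h
      · -- t < u
        have htu : t < u := h
        rcases Nat.lt_or_ge (eRun S t + 1) u with h2 | h2
        · left
          show eRun S t + 1 < u
          omega
        · rcases Nat.lt_or_ge u (eRun S t + 1) with h3 | h3
          · -- flip zone t < u ≤ eRun S t : contradiction
            exfalso
            have huS : u ∈ S := run_mem htS (by omega) (by omega)
            have hju : j ≤ 2 := by
              have : j ≠ 3 := fun hj => hqm ⟨hj, huS⟩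
              omega
            have := flip_zone_lt (t := u) hα hS hrow hA htS (by omega) (by omega)
              hqcd.1 hju
            omega
          · -- u = eRun S t + 1
            right
            refine ⟨?_, ?_⟩
            · show u = eRun S t + 1
              omega
            · show j < eRun S t + 1 + part α (eRun S t + 1) - t
              have hj : j ≤ part α (eRun S t + 1) := by
                rw [(by omega : eRun S t + 1 = u)]
                exact hqcd.2.2.2
              omega
      · -- u = t ∧ j < 3 : contradiction via values
        exfalso
        have heq : u = t := h.1
        have hj3 : j < 3 := h.2
        subst heq
        have hju : (j, u) ∈ cd α := hq
        have h3mem : (3, u) ∈ cd α := row3_mem hS htS (by omega) (le_refl _)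
        have := rowLt hrow hju h3mem hj3
        omega
  · -- p unmoved
    rw [siginv_unmoved (q := (i, t)) hpm]
    by_cases hqm : j = 3 ∧ u ∈ S
    · -- q moved, hlt gives t < u
      obtain ⟨rfl, huS⟩ := hqm
      obtain ⟨hue, huL, huc⟩ := moved_box_facts hα hS huS
      rw [siginv_moved huS]
      have htu : t < u := by
        rcases hlt with h | h
        · exact h
        · exfalso
          have h1 : (3 : ℕ) < i := h.2
          have h2 : u = t := h.1
          have : i ≤ part α t := hpcd.2.2.2
          omega
      left
      show t < eRun S u + 1
      omega
    · rw [siginv_unmoved (q := (j, u)) hqm]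
      exact hlt

theorem siginv_readlt' (hα : IsPeakComposition n α) (hparts : ∀ a ∈ α, a ≤ 3)
    (hS : S ⊆ Ialpha α) (hstd : IsStandardFilling α T) (hrow : RowsIncrease α T)
    (hA : ∀ s ∈ S, T (part α (s + 1), s + 1) < T (part α s, s))
    (hpeak : PeakCond α T) {p q : ℕ × ℕ} (hp : p ∈ cd α) (hq : q ∈ cd α)
    (hval : T q = T p + 1) (hlt : readlt p q) :
    readlt (siginv α S p) (siginv α S q) := by
  obtain ⟨i, t⟩ := p
  obtain ⟨j, u⟩ := q
  have hpcd := mem_cd.1 hp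
  have hqcd := mem_cd.1 hq
  have h3t : part α t ≤ 3 := part_le3 hparts hpcd.2.2.1 hpcd.2.1
  have h3u : part α u ≤ 3 := part_le3 hparts hqcd.2.2.1 hqcd.2.1
  by_cases hqm : j = 3 ∧ u ∈ S
  · obtain ⟨rfl, huS⟩ := hqm
    obtain ⟨hue, huL, huc⟩ := moved_box_facts hα hS huS
    rw [siginv_moved huS]
    by_cases hpm : i = 3 ∧ t ∈ S
    · -- both moved, hlt gives u < t
      obtain ⟨rfl, htS⟩ := hpm
      obtain ⟨hte, htL, htc⟩ := moved_box_facts hα hS htS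
      rw [siginv_moved htS]
      have hut : u < t := by
        rcases hlt with h | h
        · exact h
        · exfalso
          have h1 : (3 : ℕ) < 3 := h.2
          omega
      rcases eRun_cases htS huS hut with he | he
      · right
        refine ⟨?_, ?_⟩
        · show eRun S t + 1 = eRun S u + 1
          omega
        · show eRun S t + 1 + part α (eRun S t + 1) - t <
            eRun S u + 1 + part α (eRun S u + 1) - u
          rw [he]
          omega
      · left
        show eRun S u + 1 < eRun S t + 1
        omega
    · -- p unmoved, value x_u = T (i, t) + 1
      rw [siginv_unmoved (q := (i, t)) hpm]
      rcases hlt with h | h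
      · -- u < t
        have hut : u < t := h
        rcases Nat.lt_or_ge (eRun S u + 1) t with h2 | h2
        · left
          show eRun S u + 1 < t
          omega
        · rcases Nat.lt_or_ge t (eRun S u + 1) with h3 | h3
          · -- flip zone u < t ≤ eRun S u : strict contradiction
            exfalso
            have htS : t ∈ S := run_mem huS (by omega) (by omega)
            have hit : i ≤ 2 := by
              have : i ≠ 3 := fun hi => hpm ⟨hi, htS⟩
              omega
            have := flip_zone_lt' (t := t) hα hS hrow hA huS (by omega) (by omega)
              hpcd.1 hit
            omega
          · -- t = eRun S u + 1
            right
            refine ⟨?_, ?_⟩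
            · show t = eRun S u + 1
              omega
            · show i < eRun S u + 1 + part α (eRun S u + 1) - u
              have hj : i ≤ part α (eRun S u + 1) := by
                rw [(by omega : eRun S u + 1 = t)]
                exact hpcd.2.2.2
              omega
      · -- t = u ∧ i < 3 : the deep flip zone
        exfalso
        have heq : t = u := h.1
        have hi3 : i < 3 := h.2
        subst heq
        rcases Nat.lt_or_ge i 2 with h1 | h1
        · -- i = 1
          have hi1 : i = 1 := by omega
          subst hi1
          have h1t : (1, t) ∈ cd α := row3_mem hS huS (by omega) (by omega)
          have h2t : (2, t) ∈ cd α := row3_mem hS huS (by omega) (by omega)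
          have h3mem : (3, t) ∈ cd α := row3_mem hS huS (by omega) (by omega)
          have l1 : T (1, t) < T (2, t) := hrow 1 t h1t h2t
          have l2 : T (2, t) < T (3, t) := hrow 2 t h2t h3mem
          omega
        · -- i = 2 : K2
          have hi2 : i = 2 := by omega
          subst hi2
          exact K2 hα hparts hS hstd hrow hA hpeak huS (by omega)
  · -- q unmoved
    rw [siginv_unmoved (q := (j, u)) hqm]
    by_cases hpm : i = 3 ∧ t ∈ S
    · -- p moved, hlt gives u < t
      obtain ⟨rfl, htS⟩ := hpm
      obtain ⟨hte, htL, htc⟩ := moved_box_facts hα hS htS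
      rw [siginv_moved htS]
      have hut : u < t := by
        rcases hlt with h | h
        · exact h
        · exfalso
          have h1 : (3 : ℕ) < j := h.2
          have : j ≤ part α u := hqcd.2.2.2
          omega
      left
      show u < eRun S t + 1
      omega
    · rw [siginv_unmoved (q := (i, t)) hpm]
      exact hlt

end Descents
section DesEq
variable {n : ℕ} {α : List ℕ} {S : Finset ℕ} {T U : ℕ × ℕ → ℕ}

theorem Des_Phi (hα : IsPeakComposition n α) (hparts : ∀ a ∈ α, a ≤ 3)
    (hS : S ⊆ Ialpha α) (hstd : IsStandardFilling α T) (hrow : RowsIncrease α T)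
    (hA : ∀ s ∈ S, T (part α (s + 1), s + 1) < T (part α s, s))
    (hpeak : PeakCond α T) :
    DesWord (wR (deltaS α S) (Phi α S T)) = DesWord (wR α T) := by
  have hinjT : Set.InjOn T (cd α) := hstd.1.injOn
  have hstdU : IsStandardFilling (deltaS α S) (Phi α S T) :=
    standard_Phi hα hparts hS hstd
  have hinjU : Set.InjOn (Phi α S T) (cd (deltaS α S)) := hstdU.1.injOn
  ext v
  rw [mem_DesWord_iff hinjU, mem_DesWord_iff hinjT]
  constructor
  · rintro ⟨p, hp, q, hq, hpv, hqv, hlt⟩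
    rw [Phi_val hp] at hpv
    rw [Phi_val hq] at hqv
    refine ⟨sig α p, sig_maps hα hS hp, sig α q, sig_maps hα hS hq, hpv, hqv, ?_⟩
    have hp' := sig_maps hα hS hp
    have hq' := sig_maps hα hS hq
    have hne : sig α q ≠ sig α p := by
      intro h
      rw [h] at hqv
      omega
    rcases readlt_total hne with h | h
    · exact h
    · exfalso
      have := siginv_readlt' hα hparts hS hstd hrow hA hpeak hp' hq'
        (by rw [hpv, hqv]) h
      rw [siginv_sig hα hS hp, siginv_sig hα hS hq] at this
      exact readlt_asymm hlt this
  · rintro ⟨p, hp, q, hq, hpv, hqv, hlt⟩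
    refine ⟨siginv α S p, siginv_maps hα hparts hS hp,
      siginv α S q, siginv_maps hα hparts hS hq, ?_, ?_, ?_⟩
    · rw [Phi_val (siginv_maps hα hparts hS hp), sig_siginv hα hS hp]
      exact hpv
    · rw [Phi_val (siginv_maps hα hparts hS hq), sig_siginv hα hS hq]
      exact hqv
    · exact siginv_readlt hα hparts hS hstd hrow hA hpeak hp hq
        (by rw [hpv, hqv]) hlt

end DesEq

section Backward
variable {n : ℕ} {α : List ℕ} {S : Finset ℕ} {U : ℕ × ℕ → ℕ}

/-- Entries in low rows are below the moved entries, via the peak condition of `U`. -/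
theorem xU_gt (hα : IsPeakComposition n α) (hparts : ∀ a ∈ α, a ≤ 3)
    (hS : S ⊆ Ialpha α) (hstdU : IsStandardFilling (deltaS α S) U)
    (hrowU : RowsIncrease (deltaS α S) U) (hpeakU : PeakCond (deltaS α S) U)
    {s t i : ℕ} (hs : s ∈ S) (ht1 : 1 ≤ t) (hte : t ≤ eRun S s)
    (hi1 : 1 ≤ i) (hi2 : i ≤ 2) :
    U (i, t) < U (eRun S s + 1 + part α (eRun S s + 1) - s, eRun S s + 1) := by
  obtain ⟨hmem, hcgt, hrL, hsig⟩ := target_mem hα hS hs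
  set c := eRun S s + 1 + part α (eRun S s + 1) - s with hc
  set k := U (c, eRun S s + 1) with hk
  have hkIcc : k ∈ Set.Icc 1 (deltaS α S).sum := hstdU.1.mapsTo hmem
  rw [Set.mem_Icc] at hkIcc
  obtain ⟨δ, hδ, hcdeq⟩ := hpeakU k hkIcc.1 hkIcc.2
  have hD : IsPeakDiagram k ((cd (deltaS α S)).filter (fun p => U p ≤ k)) :=
    (peakDiagram_iff hkIcc.1).1 ⟨δ, hδ, hcdeq⟩
  have hcd : (c, eRun S s + 1) ∈ (cd (deltaS α S)).filter (fun p => U p ≤ k) :=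
    Finset.mem_filter.2 ⟨hmem, le_refl _⟩
  have h2t := hD.two_mem (t := t) hcd ht1 (by omega)
  rw [Finset.mem_filter] at h2t
  have h2cd : (2, t) ∈ cd (deltaS α S) := h2t.1
  have hicd : (i, t) ∈ cd (deltaS α S) := by
    rw [mem_cd] at h2cd ⊢
    exact ⟨hi1, h2cd.2.1, h2cd.2.2.1, by omega⟩
  have hle : U (i, t) ≤ U (2, t) := rowLe hrowU hicd h2cd hi2
  have hne : U (i, t) ≠ k := by
    intro h
    have := hstdU.1.injOn hicd hmem (by rw [h])
    rw [Prod.ext_iff] at this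
    simp only at this
    omega
  have := h2t.2
  omega

theorem eRun_eq_self (hS : S ⊆ Ialpha α) {s : ℕ} (hs : s ∈ S) (h : s + 1 ∉ S) :
    eRun S s = s := le_antisymm (eRun_le (le_refl s) h) le_eRun

theorem eRun_succ_mem (hs : s ∈ S) (h : s + 1 ∈ S) {S : Finset ℕ} : True := trivial

theorem A_Psi (hα : IsPeakComposition n α) (hparts : ∀ a ∈ α, a ≤ 3)
    (hS : S ⊆ Ialpha α) (hstdU : IsStandardFilling (deltaS α S) U)
    (hrowU : RowsIncrease (deltaS α S) U) (hpeakU : PeakCond (deltaS α S) U)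
    {s : ℕ} (hs : s ∈ S) :
    Psi α S U (part α (s + 1), s + 1) < Psi α S U (part α s, s) := by
  obtain ⟨hs1, hsL, hp3, -⟩ := S_facts hS hs
  have h3s : (3, s) ∈ cd α := row3_mem hS hs (by omega) (le_refl _)
  have hlast : (part α (s + 1), s + 1) ∈ cd α := mem_cd.2
    ⟨part_pos hα (by omega) hsL, by omega, hsL, le_refl _⟩
  rw [hp3, Psi_val h3s, Psi_val hlast, siginv_moved hs]
  obtain ⟨hmem, hcgt, hrL, -⟩ := target_mem hα hS hs
  by_cases hs1S : s + 1 ∈ S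
  · -- same run: both moved, compare within row eRun S s + 1
    have hs1e : s + 1 ≤ eRun S s := by
      rcases Nat.lt_or_ge (eRun S s) (s + 1) with h | h
      · exfalso
        have heq : eRun S s = s := by have := le_eRun (S := S) (s := s); omega
        have hnm := eRun_succ_not_mem (S := S) (s := s)
        rw [heq] at hnm
        exact hnm hs1S
      · exact h
    have hee : eRun S (s + 1) = eRun S s := eRun_eq_of_run hs (by omega) hs1e
    have hp31 : part α (s + 1) = 3 := (S_facts hS hs1S).2.2.1
    rw [hp31, siginv_moved hs1S, hee]
    obtain ⟨hmem1, hcgt1, hrL1, -⟩ := target_mem hα hS hs1S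
    rw [hee] at hmem1
    apply rowLt hrowU hmem1 hmem
    omega
  · -- run ends at s
    have he : eRun S s = s := eRun_eq_self hS hs hs1S
    rw [siginv_unmoved (q := (part α (s + 1), s + 1)) (by
      simp only [not_and]
      intro h3 h
      exact absurd h hs1S)]
    rw [he]
    have hmem' : (part α (s + 1), s + 1) ∈ cd (deltaS α S) := by
      rw [mem_cd, length_deltaS]
      refine ⟨part_pos hα (by omega) hsL, by omega, hsL, ?_⟩
      rw [part_deltaS (by omega) hsL, if_neg hs1S, if_pos (by simpa using hs)]
      omega
    rw [he] at hmem
    have hcol : s + 1 + part α (s + 1) - s = part α (s + 1) + 1 := by omega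
    rw [hcol]
    rw [hcol] at hmem
    exact hrowU (part α (s + 1)) (s + 1) hmem' hmem

theorem rows_Psi (hα : IsPeakComposition n α) (hparts : ∀ a ∈ α, a ≤ 3)
    (hS : S ⊆ Ialpha α) (hstdU : IsStandardFilling (deltaS α S) U)
    (hrowU : RowsIncrease (deltaS α S) U) (hpeakU : PeakCond (deltaS α S) U) :
    RowsIncrease α (Psi α S U) := by
  intro i r h h1
  rw [Psi_val h, Psi_val h1]
  have hb := mem_cd.1 h
  have hb1 := mem_cd.1 h1
  have h3 : part α r ≤ 3 := part_le3 hparts hb.2.2.1 hb.2.1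
  by_cases hmv : i + 1 = 3 ∧ r ∈ S
  · -- moving case: i = 2, r ∈ S
    obtain ⟨hi2, hrS⟩ := hmv
    have hieq : i = 2 := by omega
    subst hieq
    show U (siginv α S (2, r)) < U (siginv α S (3, r))
    rw [siginv_moved hrS]
    rw [siginv_unmoved (q := (2, r)) (by simp only [not_and]; intro h'; omega)]
    exact xU_gt hα hparts hS hstdU hrowU hpeakU hrS hb.2.1 le_eRun (by omega) (le_refl _)
  · have hmv' : ¬(i = 3 ∧ r ∈ S) := by
      intro h'
      obtain ⟨hi3, hrS⟩ := h'
      subst hi3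
      omega
    rw [siginv_unmoved (q := (i + 1, r)) (by simpa using hmv),
      siginv_unmoved (q := (i, r)) (by simpa using hmv')]
    have hpd : i + 1 ≤ part (deltaS α S) r := by
      rw [part_deltaS hb.2.1 hb.2.2.1]
      by_cases hrS : r ∈ S
      · rw [if_pos hrS]
        have hi3 : i + 1 ≠ 3 := fun h' => hmv ⟨h', hrS⟩
        have := (S_facts hS hrS).2.2.1
        omega
      · rw [if_neg hrS]
        have := hb1.2.2.2
        by_cases h2 : r - 1 ∈ S
        · rw [if_pos h2]; omega
        · rw [if_neg h2]; omega
    apply hrowU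
    · rw [mem_cd, length_deltaS]
      exact ⟨hb.1, hb.2.1, hb.2.2.1, by omega⟩
    · rw [mem_cd, length_deltaS]
      exact ⟨by omega, hb.2.1, hb.2.2.1, hpd⟩

theorem cols_Psi (hα : IsPeakComposition n α) (hS : S ⊆ Ialpha α)
    (hcolU : FirstColIncreases (deltaS α S) U) :
    FirstColIncreases α (Psi α S U) := by
  intro r h h1
  rw [Psi_val h, Psi_val h1]
  have hb := mem_cd.1 h
  have hb1 := mem_cd.1 h1
  rw [siginv_unmoved (q := (1, r)) (by simp), siginv_unmoved (q := (1, r + 1)) (by simp)]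
  apply hcolU
  · rw [mem_cd, length_deltaS]
    exact ⟨le_refl _, hb.2.1, hb.2.2.1, part_deltaS_pos hα hS hb.2.1 hb.2.2.1⟩
  · rw [mem_cd, length_deltaS]
    exact ⟨le_refl _, by omega, hb1.2.2.1, part_deltaS_pos hα hS (by omega) hb1.2.2.1⟩

end Backward
section BackwardPeak
variable {n : ℕ} {α : List ℕ} {S : Finset ℕ} {U : ℕ × ℕ → ℕ}

theorem peak_Psi (hα : IsPeakComposition n α) (hparts : ∀ a ∈ α, a ≤ 3)
    (hS : S ⊆ Ialpha α) (hstdU : IsStandardFilling (deltaS α S) U)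
    (hrowU : RowsIncrease (deltaS α S) U) (hpeakU : PeakCond (deltaS α S) U) :
    PeakCond α (Psi α S U) := by
  intro k hk1 hk2
  obtain ⟨δ, hδ, hcdeq⟩ := hpeakU k hk1 (by rw [sum_deltaS hα hparts hS]; exact hk2)
  have hD : IsPeakDiagram k ((cd (deltaS α S)).filter (fun p => U p ≤ k)) :=
    (peakDiagram_iff hk1).1 ⟨δ, hδ, hcdeq⟩
  set DU := (cd (deltaS α S)).filter (fun p => U p ≤ k) with hDUdef
  have hDUmem : ∀ p : ℕ × ℕ, p ∈ DU ↔ p ∈ cd (deltaS α S) ∧ U p ≤ k := by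
    intro p; simp [hDUdef, Finset.mem_filter]
  rw [peakDiagram_iff hk1]
  set B := (cd α).filter (fun q => Psi α S U q ≤ k) with hBdef
  have hBmem : ∀ q : ℕ × ℕ, q ∈ B ↔ q ∈ cd α ∧ U (siginv α S q) ≤ k := by
    intro q
    simp only [hBdef, Finset.mem_filter, and_congr_right_iff]
    intro hq
    rw [Psi_val hq]
  -- membership of unmoved boxes in cd (deltaS α S)
  have hunmv_cd : ∀ i r : ℕ, (i, r) ∈ cd α → ¬(i = 3 ∧ r ∈ S) →
      (i, r) ∈ cd (deltaS α S) := by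
    intro i r hcd hmv
    have hb := mem_cd.1 hcd
    rw [mem_cd, length_deltaS]
    refine ⟨hb.1, hb.2.1, hb.2.2.1, ?_⟩
    rw [part_deltaS hb.2.1 hb.2.2.1]
    by_cases hrS : r ∈ S
    · rw [if_pos hrS]
      have h3 : part α r = 3 := (S_facts hS hrS).2.2.1
      have : i ≠ 3 := fun h => hmv ⟨h, hrS⟩
      omega
    · rw [if_neg hrS]
      by_cases h2 : r - 1 ∈ S
      · rw [if_pos h2]; omega
      · rw [if_neg h2]; exact hb.2.2.2
  refine ⟨?_, ?_, ?_, ?_, ?_⟩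
  · -- cardinality
    rw [← hD.1]
    apply Finset.card_nbij' (i := fun q => siginv α S q) (j := fun p => sig α p)
    · intro q hq
      rw [Finset.mem_coe, hBmem] at hq
      rw [Finset.mem_coe, hDUmem]
      exact ⟨siginv_maps hα hparts hS hq.1, hq.2⟩
    · intro p hp
      rw [Finset.mem_coe, hDUmem] at hp
      rw [Finset.mem_coe, hBmem]
      refine ⟨sig_maps hα hS hp.1, ?_⟩
      rw [siginv_sig hα hS hp.1]
      exact hp.2
    · intro q hq
      rw [Finset.mem_coe, hBmem] at hq
      exact sig_siginv hα hS hq.1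
    · intro p hp
      rw [Finset.mem_coe, hDUmem] at hp
      exact siginv_sig hα hS hp.1
  · intro i r hir
    rw [hBmem] at hir
    have := mem_cd.1 hir.1
    exact ⟨this.1, this.2.1⟩
  · -- left-closedness
    intro i r hir
    rw [hBmem] at hir ⊢
    obtain ⟨hcd, hval⟩ := hir
    have hb := mem_cd.1 hcd
    have hcd1 : (i + 1, r) ∈ cd α := mem_cd.2 ⟨by omega, hb.2.1, hb.2.2.1, by omega⟩
    refine ⟨hcd1, ?_⟩
    have h3 : part α r ≤ 3 := part_le3 hparts hb.2.2.1 hb.2.1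
    by_cases hmv : i + 2 = 3 ∧ r ∈ S
    · -- i = 1, the box (3, r) is moved
      obtain ⟨hi2, hrS⟩ := hmv
      have hieq : i = 1 := by omega
      subst hieq
      have hval' : U (siginv α S (3, r)) ≤ k := hval
      rw [siginv_moved hrS] at hval'
      show U (siginv α S (2, r)) ≤ k
      rw [siginv_unmoved (q := (2, r)) (by simp only [not_and]; intro h'; omega)]
      have hx := xU_gt (i := 2) (t := r) hα hparts hS hstdU hrowU hpeakU hrS
        hb.2.1 le_eRun (by omega) (le_refl _)
      omega
    · -- (i+2, r) unmoved
      rw [siginv_unmoved (q := (i + 2, r)) (by simpa using hmv)] at hval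
      have hmv1 : ¬(i + 1 = 3 ∧ r ∈ S) := by
        intro h'
        obtain ⟨h1, hrS⟩ := h'
        have h3' : part α r = 3 := (S_facts hS hrS).2.2.1
        omega
      rw [siginv_unmoved (q := (i + 1, r)) (by simpa using hmv1)]
      have hcdb2 : (i + 2, r) ∈ cd (deltaS α S) := hunmv_cd _ _ hcd (by simpa using hmv)
      have hcdb1 : (i + 1, r) ∈ cd (deltaS α S) := by
        rw [mem_cd, length_deltaS] at hcdb2 ⊢
        exact ⟨by omega, hcdb2.2.1, hcdb2.2.2.1, by omega⟩
      have h' : U (i + 1, r) < U (i + 2, r) := hrowU (i + 1) r hcdb1 hcdb2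
      omega
  · -- downward closedness
    intro i r hir
    rw [hBmem] at hir ⊢
    obtain ⟨hcd, hval⟩ := hir
    have hb := mem_cd.1 hcd
    have hcd1 : (1, r + 1) ∈ cd α :=
      mem_cd.2 ⟨le_refl _, by omega, by omega, part_pos hα (by omega) (by omega)⟩
    refine ⟨hcd1, ?_⟩
    rw [siginv_unmoved (q := (1, r + 1)) (by simp)]
    have hmemDU : (1, r + 1) ∈ DU := by
      by_cases hmv : i = 3 ∧ r + 2 ∈ S
      · obtain ⟨rfl, hrS⟩ := hmv
        rw [siginv_moved hrS] at hval
        obtain ⟨hmem, hcgt, hrL, -⟩ := target_mem hα hS hrS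
        have hin : (eRun S (r + 2) + 1 + part α (eRun S (r + 2) + 1) - (r + 2),
            eRun S (r + 2) + 1) ∈ DU := (hDUmem _).2 ⟨hmem, hval⟩
        have hre : r + 2 ≤ eRun S (r + 2) := le_eRun
        exact hD.down_closed hin (by omega) (by omega)
      · rw [siginv_unmoved (q := (i, r + 2)) (by simpa using hmv)] at hval
        have hcdb : (i, r + 2) ∈ cd (deltaS α S) := hunmv_cd _ _ hcd (by simpa using hmv)
        have hin : (i, r + 2) ∈ DU := (hDUmem _).2 ⟨hcdb, hval⟩
        exact hD.2.2.2.1 i r hin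
    exact ((hDUmem _).1 hmemDU).2
  · -- peak width
    intro r h1r h1r1
    rw [hBmem] at h1r h1r1 ⊢
    obtain ⟨hcd1, hval1⟩ := h1r
    obtain ⟨hcd2, hval2⟩ := h1r1
    have hb1 := mem_cd.1 hcd1
    have hb2 := mem_cd.1 hcd2
    rw [siginv_unmoved (q := (1, r)) (by simp)] at hval1
    rw [siginv_unmoved (q := (1, r + 1)) (by simp)] at hval2
    have hcd2' : (2, r) ∈ cd α :=
      mem_cd.2 ⟨by omega, hb1.2.1, hb1.2.2.1, part_ge2 hα hb1.2.1 hb2.2.2.1⟩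
    refine ⟨hcd2', ?_⟩
    rw [siginv_unmoved (q := (2, r)) (by simp)]
    have hDU1 : (1, r) ∈ DU := (hDUmem _).2 ⟨hunmv_cd _ _ hcd1 (by simp), hval1⟩
    have hDU2 : (1, r + 1) ∈ DU := (hDUmem _).2 ⟨hunmv_cd _ _ hcd2 (by simp), hval2⟩
    have := hD.2.2.2.2 r hDU1 hDU2
    rw [hDUmem] at this
    exact this.2

end BackwardPeak
/-- Let `α` be a peak composition with all parts at most `3` and let
`S ⊆ I_α`. Then the multisets `{Des(w_r(T)) : T ∈ ⋂_{s∈S} A_α(s)}` and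
`{Des(w_r(T)) : T ∈ SPIT(Δ_S(α))}` coincide (for `S = ∅` the intersection is `SPIT(α)`);
equivalently, every `D` occurs with the same multiplicity in both families. -/
theorem descent_multiset_inter_Aset (n : ℕ) (α : List ℕ) (hα : IsPeakComposition n α)
    (hparts : ∀ a ∈ α, a ≤ 3) (S : Finset ℕ) (hS : S ⊆ Ialpha α) (D : Finset ℕ) :
    {T ∈ SPITset α ∩ ⋂ s ∈ S, Aset α s | DesWord (wR α T) = D}.ncard =
      {T ∈ SPITset (deltaS α S) | DesWord (wR (deltaS α S) T) = D}.ncard := by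
  set L : Set (ℕ × ℕ → ℕ) :=
    {T ∈ SPITset α ∩ ⋂ s ∈ S, Aset α s | DesWord (wR α T) = D} with hLdef
  set R : Set (ℕ × ℕ → ℕ) :=
    {T ∈ SPITset (deltaS α S) | DesWord (wR (deltaS α S) T) = D} with hRdef
  have hLmem : ∀ T, T ∈ L ↔ IsSPIT α T ∧
      (∀ s ∈ S, T (part α (s + 1), s + 1) < T (part α s, s)) ∧
      DesWord (wR α T) = D := by
    intro T
    simp only [hLdef, Set.mem_setOf_eq, Set.mem_inter_iff, Set.mem_iInter,
      SPITset, Aset, Set.mem_setOf_eq]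
    constructor
    · rintro ⟨⟨h1, h2⟩, h3⟩
      exact ⟨h1, fun s hs => (h2 s hs).2, h3⟩
    · rintro ⟨h1, h2, h3⟩
      exact ⟨⟨h1, fun s hs => ⟨h1, h2 s hs⟩⟩, h3⟩
  have hRmem : ∀ U, U ∈ R ↔ IsSPIT (deltaS α S) U ∧
      DesWord (wR (deltaS α S) U) = D := by
    intro U
    simp only [hRdef, Set.mem_setOf_eq, SPITset]
  have hfwd : ∀ T ∈ L, Phi α S T ∈ R := by
    intro T hT
    rw [hLmem] at hT
    obtain ⟨⟨⟨hstd, hrow, hcol⟩, hpeak⟩, hA, hdes⟩ := hT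
    rw [hRmem]
    refine ⟨⟨⟨standard_Phi hα hparts hS hstd, rows_Phi hα hparts hS hrow hA,
      cols_Phi hα hS hcol⟩, peak_Phi hα hparts hS hrow hA hpeak⟩, ?_⟩
    rw [Des_Phi hα hparts hS hstd hrow hA hpeak]
    exact hdes
  have hbwd : ∀ U ∈ R, Psi α S U ∈ L ∧ Phi α S (Psi α S U) = U := by
    intro U hU
    rw [hRmem] at hU
    obtain ⟨⟨⟨hstdU, hrowU, hcolU⟩, hpeakU⟩, hdesU⟩ := hU
    have hstd' := standard_Psi hα hparts hS hstdU
    have hrow' := rows_Psi hα hparts hS hstdU hrowU hpeakU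
    have hcol' := cols_Psi hα hS hcolU
    have hpeak' := peak_Psi hα hparts hS hstdU hrowU hpeakU
    have hA' : ∀ s ∈ S, Psi α S U (part α (s + 1), s + 1) < Psi α S U (part α s, s) :=
      fun s hs => A_Psi hα hparts hS hstdU hrowU hpeakU hs
    have hPP : Phi α S (Psi α S U) = U := Phi_Psi hα hparts hS hstdU.2
    refine ⟨?_, hPP⟩
    rw [hLmem]
    refine ⟨⟨⟨hstd', hrow', hcol'⟩, hpeak'⟩, hA', ?_⟩
    have := Des_Phi hα hparts hS hstd' hrow' hA' hpeak'
    rw [hPP] at this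
    rw [← this]
    exact hdesU
  have hinj : Set.InjOn (Phi α S) L := by
    intro T1 h1 T2 h2 heq
    rw [hLmem] at h1 h2
    have e1 : Psi α S (Phi α S T1) = T1 :=
      Psi_Phi hα hparts hS h1.1.1.1.2
    have e2 : Psi α S (Phi α S T2) = T2 :=
      Psi_Phi hα hparts hS h2.1.1.1.2
    rw [← e1, ← e2, heq]
  have himg : Phi α S '' L = R := by
    apply Set.eq_of_subset_of_subset
    · rintro _ ⟨T, hT, rfl⟩
      exact hfwd T hT
    · intro U hU
      obtain ⟨hPsiU, hPP⟩ := hbwd U hU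
      exact ⟨Psi α S U, hPsiU, hPP⟩
  rw [← himg, Set.ncard_image_of_injOn hinj]

end PaperSPIT
end

section
/- Let α be a peak composition with at most one part greater than 2. If α = (2,…,2,k) or α = (2,…,2,k,1) for some k ≥ 2 (possibly with no parts equal to 2), then PYQS_α = QSQ_α. Otherwise — that is, α = (2^a, k, 2^b) or (2^a, k, 2^b, 1) with k ≥ 3 and b ≥ 1 — one has PYQS_α = QSQ_α − QSQ_{s_i·α}, where i is the index with α_i = k and s_i·α is the composition obtained from α by swapping its i-th and (i+1)-st parts. -/
namespace PaperSPIT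

def setComp (α : List ℕ) : Finset ℕ :=
  (((α.scanl (· + ·) 0).drop 1).dropLast).toFinset

def compOf (n : ℕ) (I : Finset ℕ) : List ℕ :=
  List.zipWith (fun a b => a - b) (I.sort (· ≤ ·) ++ [n]) (0 :: I.sort (· ≤ ·))

def PeakSet (X : Finset ℕ) : Finset ℕ := X.filter fun i => 1 < i ∧ i - 1 ∉ X

noncomputable def Fqs (n : ℕ) (α : List ℕ) : MvPowerSeries ℕ ℤ := fun d =>
  (Set.ncard {f : Fin n → ℕ |
      (∀ j, 1 ≤ f j) ∧ Monotone f ∧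
      (∀ j k : Fin n, (k : ℕ) = (j : ℕ) + 1 → ((j : ℕ) + 1) ∈ setComp α → f j < f k) ∧
      ∀ m : ℕ, d m = (Finset.univ.filter fun j : Fin n => f j = m).card} : ℤ)

noncomputable def Kqs (n : ℕ) (α : List ℕ) : MvPowerSeries ℕ ℤ :=
  (2 ^ ((setComp α).card + 1) : ℕ) •
    ∑ β : Composition n,
      if setComp α ⊆ symmDiff (setComp β.blocks) ((setComp β.blocks).image (· + 1))
      then Fqs n β.blocks else 0

/-- The quasisymmetric Schur `Q`-function of a peak composition `α` of `n`. -/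
noncomputable def QSQ (n : ℕ) (α : List ℕ) : MvPowerSeries ℕ ℤ :=
  ∑ᶠ T ∈ SPITset α, Kqs n (compOf n (PeakSet (DesWord (wC α T))))

/-- The peak Young quasisymmetric Schur function of a peak composition `α` of `n`. -/
noncomputable def PYQS (n : ℕ) (α : List ℕ) : MvPowerSeries ℕ ℤ :=
  ∑ᶠ T ∈ SPYCTset α, Kqs n (compOf n (PeakSet (DesWord (wY α T))))

lemma le_maxPart_s13 {l : List ℕ} {x : ℕ} (hx : x ∈ l) : x ≤ maxPart l := by
  induction l with
  | nil => simp at hx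
  | cons a t ih =>
    rcases List.mem_cons.1 hx with h | h
    · simp [maxPart, h]
    · have := ih h
      simp only [maxPart, List.foldr_cons] at *
      omega

lemma maxPart_le {l : List ℕ} {m : ℕ} (h : ∀ x ∈ l, x ≤ m) : maxPart l ≤ m := by
  induction l with
  | nil => simp [maxPart]
  | cons a t ih =>
    have h1 := h a (by simp)
    have h2 := ih (fun x hx => h x (by simp [hx]))
    simp only [maxPart, List.foldr_cons] at *
    omega

lemma part_le_maxPart_s13 (α : List ℕ) (j : ℕ) : part α j ≤ maxPart α := by
  unfold part
  rcases lt_or_ge (j - 1) α.length with h | h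
  · rw [List.getD_eq_getElem _ _ h]
    exact le_maxPart_s13 (List.getElem_mem h)
  · rw [List.getD_eq_default _ _ h]
    exact Nat.zero_le _

lemma mem_cd_s13 {α : List ℕ} {c j : ℕ} :
    (c, j) ∈ cd α ↔ 1 ≤ c ∧ 1 ≤ j ∧ j ≤ α.length ∧ c ≤ part α j := by
  unfold cd
  simp only [Finset.mem_filter, Finset.mem_product, Finset.mem_Icc]
  constructor
  · rintro ⟨⟨⟨h1, h2⟩, h3, h4⟩, h5⟩
    exact ⟨h1, h3, h4, h5⟩
  · rintro ⟨h1, h3, h4, h5⟩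
    exact ⟨⟨⟨h1, le_trans h5 (part_le_maxPart_s13 α j)⟩, h3, h4⟩, h5⟩

def Dsh (a k b e : ℕ) : List ℕ :=
  List.replicate a 2 ++ k :: (List.replicate b 2 ++ List.replicate e 1)

lemma length_Dsh (a k b e : ℕ) : (Dsh a k b e).length = a + 1 + b + e := by
  simp [Dsh]; omega

lemma sum_Dsh (a k b e : ℕ) : (Dsh a k b e).sum = 2 * a + k + 2 * b + e := by
  simp [Dsh, List.sum_replicate]; ring

lemma getD_replicate' {a x i : ℕ} (h : i < a) : (List.replicate a x).getD i 0 = x := by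
  simp [List.getD_eq_getElem?_getD, List.getElem?_replicate, h]

lemma part_Dsh_low {a k b e j : ℕ} (h1 : 1 ≤ j) (h2 : j ≤ a) : part (Dsh a k b e) j = 2 := by
  unfold part Dsh
  rw [List.getD_append _ _ _ _ (by simp; omega)]
  exact getD_replicate' (by omega)

lemma part_Dsh_mid {a k b e : ℕ} : part (Dsh a k b e) (a + 1) = k := by
  unfold part Dsh
  rw [List.getD_append_right _ _ _ _ (by simp)]
  simp

lemma part_Dsh_high {a k b e j : ℕ} (h1 : a + 1 < j) (h2 : j ≤ a + 1 + b) :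
    part (Dsh a k b e) j = 2 := by
  unfold part Dsh
  rw [List.getD_append_right _ _ _ _ (by simp; omega)]
  have : j - 1 - (List.replicate a 2).length = (j - 2 - a) + 1 := by simp; omega
  rw [this, List.getD_cons_succ,
    List.getD_append _ _ _ _ (by simp; omega)]
  exact getD_replicate' (by omega)

lemma part_Dsh_one {a k b e j : ℕ} (h1 : a + 1 + b < j) (h2 : j ≤ a + 1 + b + e) :
    part (Dsh a k b e) j = 1 := by
  unfold part Dsh
  rw [List.getD_append_right _ _ _ _ (by simp; omega)]
  have : j - 1 - (List.replicate a 2).length = (j - 2 - a) + 1 := by simp; omega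
  rw [this, List.getD_cons_succ,
    List.getD_append_right _ _ _ _ (by simp; omega)]
  exact getD_replicate' (by simp; omega)

lemma part_Dsh_zero {a k b e j : ℕ} (h1 : a + 1 + b + e < j) : part (Dsh a k b e) j = 0 := by
  unfold part
  rw [List.getD_eq_default]
  rw [length_Dsh]; omega

lemma maxPart_Dsh {a k b e : ℕ} (hk : 2 ≤ k) : maxPart (Dsh a k b e) = k := by
  refine le_antisymm (maxPart_le ?_) (le_maxPart_s13 ?_)
  · intro x hx
    simp only [Dsh, List.mem_append, List.mem_replicate, List.mem_cons] at hx
    rcases hx with ⟨_, rfl⟩ | rfl | ⟨_, rfl⟩ | ⟨_, rfl⟩ <;> omega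
  · simp [Dsh]

lemma pos_Dsh {a k b e : ℕ} (hk : 1 ≤ k) : ∀ x ∈ Dsh a k b e, 0 < x := by
  intro x hx
  simp only [Dsh, List.mem_append, List.mem_replicate, List.mem_cons] at hx
  rcases hx with ⟨_, rfl⟩ | rfl | ⟨_, rfl⟩ | ⟨_, rfl⟩ <;> omega


lemma peak_Dsh {a k b e : ℕ} (hk : 2 ≤ k) (he : e ≤ 1) :
    IsPeakComposition (Dsh a k b e).sum (Dsh a k b e) := by
  refine ⟨⟨pos_Dsh (by omega), rfl⟩, ?_⟩
  intro i hi
  rw [length_Dsh] at hi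
  have hp : (Dsh a k b e).getD i 0 = part (Dsh a k b e) (i + 1) := by simp [part]
  rw [hp]
  rcases Nat.lt_or_ge (i + 1) (a + 1) with h | h
  · rw [part_Dsh_low (by omega) (by omega)]; omega
  · rcases Nat.eq_or_lt_of_le h with h' | h'
    · rw [← h', part_Dsh_mid]; omega
    · rw [part_Dsh_high (by omega) (by omega)]; omega



/-- Key consequence of the peak condition: the box `(2,j)` is filled before `(1,j+1)`. -/
lemma peak_chain {α : List ℕ} {T : ℕ × ℕ → ℕ} (hT : IsSPIT α T) {j : ℕ} (hj : 1 ≤ j)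
    (hcd : (1, j + 1) ∈ cd α) : (2, j) ∈ cd α ∧ T (2, j) < T (1, j + 1) := by
  obtain ⟨⟨⟨hbij, hzero⟩, hrow, hcol⟩, hpeak⟩ := hT
  set m := T (1, j + 1) with hm
  have hmIcc : m ∈ Set.Icc 1 α.sum := hbij.mapsTo hcd
  obtain ⟨β, hβ, hfil⟩ := hpeak m hmIcc.1 hmIcc.2
  have h1 : (1, j + 1) ∈ cd β := by
    rw [← hfil]; exact Finset.mem_filter.2 ⟨hcd, le_refl m⟩
  rw [mem_cd_s13] at h1
  have hlenβ : j + 1 ≤ β.length := h1.2.2.1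
  have hpartβ : 2 ≤ part β j := by
    have := hβ.2 (j - 1) (by omega)
    have heq : β.getD (j - 1) 0 = part β j := by simp [part]
    omega
  have h2 : (2, j) ∈ cd β := mem_cd_s13.2 ⟨by omega, hj, by omega, hpartβ⟩
  rw [← hfil] at h2
  have h2' := Finset.mem_filter.1 h2
  refine ⟨h2'.1, lt_of_le_of_ne h2'.2 ?_⟩
  intro he
  have : (2, j) = (1, j + 1) := hbij.injOn h2'.1 hcd he
  simp at this

/-- First column entries are strictly increasing across rows. -/
lemma col1_lt {α : List ℕ} {T : ℕ × ℕ → ℕ} (hT : IsSPIT α T)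
    (hpos : ∀ m, 1 ≤ m → m ≤ α.length → 1 ≤ part α m)
    {i j : ℕ} (h1 : 1 ≤ i) (hij : i < j) (hj : j ≤ α.length) : T (1, i) < T (1, j) := by
  induction j with
  | zero => omega
  | succ j ih =>
    have hcdj1 : (1, j + 1) ∈ cd α := mem_cd_s13.2 ⟨le_refl 1, by omega, hj, hpos _ (by omega) hj⟩
    have hcdj : (1, j) ∈ cd α := mem_cd_s13.2 ⟨le_refl 1, by omega, by omega, hpos _ (by omega) (by omega)⟩
    have hstep := hT.1.2.2 j hcdj hcdj1
    rcases Nat.lt_or_ge i j with h | h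
    · exact lt_trans (ih h (by omega)) hstep
    · have : i = j := by omega
      rw [this]; exact hstep

/-- `T (2, i) < T (1, j)` whenever `i < j`. -/
lemma two_lt_col1 {α : List ℕ} {T : ℕ × ℕ → ℕ} (hT : IsSPIT α T)
    (hpos : ∀ m, 1 ≤ m → m ≤ α.length → 1 ≤ part α m)
    {i j : ℕ} (hij : i < j) (hj : j ≤ α.length) (hi : (2, i) ∈ cd α) : T (2, i) < T (1, j) := by
  have hi1 : 1 ≤ i := (mem_cd_s13.1 hi).2.1
  have hcdi1 : (1, i + 1) ∈ cd α :=
    mem_cd_s13.2 ⟨le_refl 1, by omega, by omega, hpos _ (by omega) (by omega)⟩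
  have hstep := (peak_chain hT hi1 hcdi1).2
  rcases Nat.lt_or_ge (i + 1) j with h | h
  · exact lt_trans hstep (col1_lt hT hpos (by omega) h hj)
  · have : j = i + 1 := by omega
    rw [this]; exact hstep

/-- Second column entries are weakly increasing where present. -/
lemma col2_mono {α : List ℕ} {T : ℕ × ℕ → ℕ} (hT : IsSPIT α T)
    {i j : ℕ} (hij : i ≤ j) (hall : ∀ m, i ≤ m → m ≤ j → (2, m) ∈ cd α) :
    T (2, i) ≤ T (2, j) := by
  induction j with
  | zero =>
    have : i = 0 := by omega
    rw [this]
  | succ j ih =>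
    rcases Nat.lt_or_ge i (j + 1) with h | h
    · have hj1 : (2, j + 1) ∈ cd α := hall _ (by omega) (le_refl _)
      have hcdj1 : (1, j + 1) ∈ cd α := by
        have := mem_cd_s13.1 hj1; exact mem_cd_s13.2 ⟨le_refl 1, this.2.1, this.2.2.1, by omega⟩
      have hj' : (2, j) ∈ cd α := hall _ (by omega) (by omega)
      have hj2 : 1 ≤ j := (mem_cd_s13.1 hj').2.1
      have hchain := (peak_chain hT hj2 hcdj1).2
      have hrow : T (2, j + 1) > T (1, j + 1) := hT.1.2.1 1 (j + 1) hcdj1 hj1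
      have := ih (by omega) (fun m hm hm2 => hall m hm (by omega))
      omega
    · have : i = j + 1 := by omega
      rw [this]



lemma wC_split {α : List ℕ} (T : ℕ × ℕ → ℕ) (h : 1 ≤ maxPart α) :
    wC α T = colList α T 1 ++
      ((List.range (maxPart α - 1)).map fun i => colList α T (i + 2)).flatten := by
  unfold wC
  obtain ⟨m, hm⟩ : ∃ m, maxPart α = m + 1 := ⟨maxPart α - 1, by omega⟩
  rw [hm]
  rw [List.range_succ_eq_map]
  simp only [List.map_cons, List.flatten_cons, List.map_map]
  congr 1

lemma mem_colList {α : List ℕ} {T : ℕ × ℕ → ℕ} {c x : ℕ} (hc : 1 ≤ c) :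
    x ∈ colList α T c ↔ ∃ j, (c, j) ∈ cd α ∧ x = T (c, j) := by
  unfold colList
  simp only [List.mem_map, List.mem_filter, List.mem_range, decide_eq_true_eq]
  constructor
  · rintro ⟨j, ⟨hj, hp⟩, rfl⟩
    exact ⟨j + 1, mem_cd_s13.2 ⟨hc, by omega, by omega, hp⟩, rfl⟩
  · rintro ⟨j, hcd, rfl⟩
    have h := mem_cd_s13.1 hcd
    obtain ⟨m, rfl⟩ : ∃ m, j = m + 1 := ⟨j - 1, by omega⟩
    exact ⟨m, ⟨by omega, h.2.2.2⟩, rfl⟩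

lemma desword_rev_prefix (u v : List ℕ)
    (hcons : ∀ i, i ∈ u → i + 1 ∈ u → False) :
    DesWord (u.reverse ++ v) = DesWord (u ++ v) := by
  unfold DesWord
  apply Finset.ext
  intro i
  simp only [Finset.mem_filter, List.mem_toFinset, List.mem_append, List.mem_reverse]
  by_cases hiu : i ∈ u
  · by_cases hi1u : (i + 1) ∈ u
    · exact absurd (hcons i hiu hi1u) (fun h => h)
    · constructor
      · rintro ⟨hm, hm1, hlt⟩
        exfalso
        have h1 : (i+1) ∈ v := by tauto
        have e1 : (u.reverse ++ v).idxOf (i+1) = u.reverse.length + v.idxOf (i+1) :=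
          List.idxOf_append_of_notMem (by simpa using hi1u)
        have e2 : (u.reverse ++ v).idxOf i = u.reverse.idxOf i :=
          List.idxOf_append_of_mem (by simpa using hiu)
        have := List.idxOf_lt_length_iff.2 (show i ∈ u.reverse by simpa using hiu)
        omega
      · rintro ⟨hm, hm1, hlt⟩
        exfalso
        have h1 : (i+1) ∈ v := by tauto
        have e1 : (u ++ v).idxOf (i+1) = u.length + v.idxOf (i+1) :=
          List.idxOf_append_of_notMem hi1u
        have e2 : (u ++ v).idxOf i = u.idxOf i :=
          List.idxOf_append_of_mem hiu
        have := List.idxOf_lt_length_iff.2 hiu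
        omega
  · by_cases hi1u : (i + 1) ∈ u
    · constructor
      · rintro ⟨hm, hm1, hlt⟩
        have h1 : i ∈ v := by tauto
        refine ⟨by tauto, by tauto, ?_⟩
        have e1 : (u ++ v).idxOf (i+1) = u.idxOf (i+1) :=
          List.idxOf_append_of_mem hi1u
        have e2 : (u ++ v).idxOf i = u.length + v.idxOf i :=
          List.idxOf_append_of_notMem hiu
        have := List.idxOf_lt_length_iff.2 hi1u
        omega
      · rintro ⟨hm, hm1, hlt⟩
        have h1 : i ∈ v := by tauto
        refine ⟨by tauto, by tauto, ?_⟩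
        have e1 : (u.reverse ++ v).idxOf (i+1) = u.reverse.idxOf (i+1) :=
          List.idxOf_append_of_mem (by simpa using hi1u)
        have e2 : (u.reverse ++ v).idxOf i = u.reverse.length + v.idxOf i :=
          List.idxOf_append_of_notMem (by simpa using hiu)
        have := List.idxOf_lt_length_iff.2 (show (i+1) ∈ u.reverse by simpa using hi1u)
        omega
    · have hu : ∀ x, x ∉ u → ∀ w, (u.reverse ++ w).idxOf x = (u ++ w).idxOf x + u.reverse.length - u.length := by
        intro x hx w
        rw [List.idxOf_append_of_notMem (by simpa using hx),
          List.idxOf_append_of_notMem hx]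
        simp
      constructor
      · rintro ⟨hm, hm1, hlt⟩
        refine ⟨by tauto, by tauto, ?_⟩
        rw [hu i hiu v, hu (i+1) hi1u v] at hlt
        simp at hlt ⊢
        omega
      · rintro ⟨hm, hm1, hlt⟩
        refine ⟨by tauto, by tauto, ?_⟩
        rw [hu i hiu v, hu (i+1) hi1u v]
        simp at hlt ⊢
        omega


/-- No two consecutive integers appear in the first column of a SPIT. -/
lemma col1_no_consec {α : List ℕ} {T : ℕ × ℕ → ℕ} (hT : IsSPIT α T)
    (hpos : ∀ m, 1 ≤ m → m ≤ α.length → 1 ≤ part α m) :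
    ∀ i, i ∈ colList α T 1 → i + 1 ∈ colList α T 1 → False := by
  intro i hi hi1
  obtain ⟨r, hrcd, hr⟩ := (mem_colList (le_refl 1)).1 hi
  obtain ⟨s, hscd, hs⟩ := (mem_colList (le_refl 1)).1 hi1
  have hrm := mem_cd_s13.1 hrcd
  have hsm := mem_cd_s13.1 hscd
  have hrs : r < s := by
    rcases Nat.lt_trichotomy r s with h | h | h
    · exact h
    · exfalso; rw [h] at hr; omega
    · exfalso
      have := col1_lt hT hpos hsm.2.1 h hrm.2.2.1
      omega
  have hcd1 : (1, r + 1) ∈ cd α :=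
    mem_cd_s13.2 ⟨le_refl 1, by omega, by omega, hpos _ (by omega) (by omega)⟩
  obtain ⟨h2cd, h2lt⟩ := peak_chain hT hrm.2.1 hcd1
  have hlow : T (1, r) < T (2, r) := hT.1.2.1 1 r hrcd h2cd
  have hup : T (2, r) < T (1, s) := by
    rcases Nat.lt_or_ge (r + 1) s with h | h
    · exact lt_trans h2lt (col1_lt hT hpos (by omega) h hsm.2.2.1)
    · have : s = r + 1 := by omega
      rw [this]; exact h2lt
  omega

/-- For a SPIT, the Young word and column word have the same descent set. -/
lemma desword_wY_eq_wC {α : List ℕ} {T : ℕ × ℕ → ℕ} (hT : IsSPIT α T)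
    (hpos : ∀ m, 1 ≤ m → m ≤ α.length → 1 ≤ part α m) (hmax : 1 ≤ maxPart α) :
    DesWord (wY α T) = DesWord (wC α T) := by
  rw [wC_split T hmax]
  exact desword_rev_prefix _ _ (col1_no_consec hT hpos)

/-- `SPITset α` is a finite set. -/
lemma spitset_finite (α : List ℕ) : (SPITset α).Finite := by
  classical
  set F : (ℕ × ℕ → ℕ) → ({p : ℕ × ℕ // p ∈ cd α} → Fin (α.sum + 1)) :=
    fun T p => ⟨min (T p.1) α.sum, by omega⟩ with hF
  have hinj : Set.InjOn F (SPITset α) := by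
    intro T hT T' hT' he
    funext p
    by_cases hp : p ∈ cd α
    · have h1 : T p ≤ α.sum := (hT.1.1.1.mapsTo hp).2
      have h2 : T' p ≤ α.sum := (hT'.1.1.1.mapsTo hp).2
      have hmm : min (T p) α.sum = min (T' p) α.sum := by
        have := congrFun he ⟨p, hp⟩
        simpa only [hF, Fin.mk.injEq] using this
      omega
    · rw [hT.1.1.2 p hp, hT'.1.1.2 p hp]
  exact Set.Finite.of_finite_image (Set.toFinite _) hinj

lemma spyct_subset_spit (α : List ℕ) : ∀ T, IsSPYCT α T → IsSPIT α T := by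
  rintro T ⟨⟨h1, h2, h3, _⟩, h5⟩
  exact ⟨⟨h1, h2, h3⟩, h5⟩


lemma part_Dsh_eq (a k b e j : ℕ) (h1 : 1 ≤ j) :
    part (Dsh a k b e) j =
      if j ≤ a then 2 else if j = a + 1 then k
      else if j ≤ a + 1 + b then 2 else if j ≤ a + 1 + b + e then 1 else 0 := by
  split_ifs with h2 h3 h4 h5
  · exact part_Dsh_low h1 h2
  · rw [h3]; exact part_Dsh_mid
  · exact part_Dsh_high (by omega) h4
  · exact part_Dsh_one (by omega) h5
  · exact part_Dsh_zero (by omega)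

/-- The row-swapping involution on boxes (swaps rows `a+1` and `a+2` in columns `≥ 3`). -/
def rho (a : ℕ) (p : ℕ × ℕ) : ℕ × ℕ :=
  if 3 ≤ p.1 ∧ p.2 = a + 1 then (p.1, a + 2)
  else if 3 ≤ p.1 ∧ p.2 = a + 2 then (p.1, a + 1) else p

lemma rho_pair (a c j : ℕ) :
    rho a (c, j) = if 3 ≤ c ∧ j = a + 1 then (c, a + 2)
      else if 3 ≤ c ∧ j = a + 2 then (c, a + 1) else (c, j) := rfl

lemma rho_invol (a : ℕ) (p : ℕ × ℕ) : rho a (rho a p) = p := by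
  rcases p with ⟨c, j⟩
  by_cases h1 : 3 ≤ c ∧ j = a + 1
  · have e1 : rho a (c, j) = (c, a + 2) := by rw [rho_pair, if_pos h1]
    rw [e1, rho_pair, if_neg (by omega), if_pos ⟨h1.1, rfl⟩, h1.2]
  · by_cases h2 : 3 ≤ c ∧ j = a + 2
    · have e1 : rho a (c, j) = (c, a + 1) := by rw [rho_pair, if_neg h1, if_pos h2]
      rw [e1, rho_pair, if_pos ⟨h2.1, rfl⟩, h2.2]
    · have e1 : rho a (c, j) = (c, j) := by rw [rho_pair, if_neg h1, if_neg h2]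
      rw [e1, e1]

lemma rho_low {a c j : ℕ} (h : c ≤ 2) : rho a (c, j) = (c, j) := by
  rw [rho_pair, if_neg (by omega), if_neg (by omega)]

lemma rho_inj (a : ℕ) : Function.Injective (rho a) := by
  intro x y h
  have := rho_invol a x
  rw [h, rho_invol] at this
  exact this.symm

lemma part_Dsh_le2 {a k b e j : ℕ} (h1 : 1 ≤ j) (h2 : j ≠ a + 1) :
    part (Dsh a k b e) j ≤ 2 := by
  rcases (by omega :
      j ≤ a ∨ (a + 1 < j ∧ j ≤ a + 1 + b) ∨ (a + 1 + b < j ∧ j ≤ a + 1 + b + e) ∨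
        a + 1 + b + e < j) with h | h | h | h
  · rw [part_Dsh_low h1 h]
  · rw [part_Dsh_high h.1 h.2]
  · rw [part_Dsh_one h.1 h.2]; omega
  · rw [part_Dsh_zero h]; omega

lemma cd_swap {a k b e : ℕ} (hk : 3 ≤ k) (hb : 1 ≤ b) (p : ℕ × ℕ) :
    p ∈ cd (Dsh (a + 1) k (b - 1) e) ↔ rho a p ∈ cd (Dsh a k b e) := by
  rcases p with ⟨c, j⟩
  have hL' : (Dsh (a + 1) k (b - 1) e).length = a + 1 + b + e := by rw [length_Dsh]; omega
  have hL : (Dsh a k b e).length = a + 1 + b + e := by rw [length_Dsh]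
  by_cases h1 : 3 ≤ c ∧ j = a + 1
  · obtain ⟨hc, rfl⟩ := h1
    have e1 : rho a (c, a + 1) = (c, a + 2) := by rw [rho_pair, if_pos ⟨hc, rfl⟩]
    rw [e1]
    simp only [mem_cd_s13, hL, hL']
    have p1 : part (Dsh (a + 1) k (b - 1) e) (a + 1) = 2 := part_Dsh_low (by omega) (by omega)
    have p2 : part (Dsh a k b e) (a + 2) = 2 := part_Dsh_high (by omega) (by omega)
    rw [p1, p2]
    omega
  · by_cases h2 : 3 ≤ c ∧ j = a + 2
    · obtain ⟨hc, rfl⟩ := h2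
      have e1 : rho a (c, a + 2) = (c, a + 1) := by
        rw [rho_pair, if_neg (by omega), if_pos ⟨hc, rfl⟩]
      rw [e1]
      simp only [mem_cd_s13, hL, hL']
      have p1 : part (Dsh (a + 1) k (b - 1) e) (a + 2) = k := part_Dsh_mid
      have p2 : part (Dsh a k b e) (a + 1) = k := part_Dsh_mid
      rw [p1, p2]
      omega
    · have e1 : rho a (c, j) = (c, j) := by rw [rho_pair, if_neg h1, if_neg h2]
      rw [e1]
      simp only [mem_cd_s13, hL, hL']
      by_cases hj0 : 1 ≤ j
      · by_cases hc : 3 ≤ c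
        · have p1 : part (Dsh (a + 1) k (b - 1) e) j ≤ 2 :=
            part_Dsh_le2 hj0 (by intro h; exact h2 ⟨hc, by omega⟩)
          have p2 : part (Dsh a k b e) j ≤ 2 :=
            part_Dsh_le2 hj0 (by intro h; exact h1 ⟨hc, h⟩)
          omega
        · rcases (by omega :
              j ≤ a ∨ j = a + 1 ∨ j = a + 2 ∨ (a + 2 < j ∧ j ≤ a + 1 + b) ∨
                (a + 1 + b < j ∧ j ≤ a + 1 + b + e) ∨ a + 1 + b + e < j) with
            h | h | h | h | h | h
          · have p1 : part (Dsh (a + 1) k (b - 1) e) j = 2 := part_Dsh_low hj0 (by omega)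
            have p2 : part (Dsh a k b e) j = 2 := part_Dsh_low hj0 (by omega)
            omega
          · subst h
            have p1 : part (Dsh (a + 1) k (b - 1) e) (a + 1) = 2 :=
              part_Dsh_low (by omega) (by omega)
            have p2 : part (Dsh a k b e) (a + 1) = k := part_Dsh_mid
            omega
          · subst h
            have p1 : part (Dsh (a + 1) k (b - 1) e) (a + 2) = k := part_Dsh_mid
            have p2 : part (Dsh a k b e) (a + 2) = 2 := part_Dsh_high (by omega) (by omega)
            omega
          · have p1 : part (Dsh (a + 1) k (b - 1) e) j = 2 := part_Dsh_high (by omega) (by omega)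
            have p2 : part (Dsh a k b e) j = 2 := part_Dsh_high (by omega) (by omega)
            omega
          · have p1 : part (Dsh (a + 1) k (b - 1) e) j = 1 := part_Dsh_one (by omega) (by omega)
            have p2 : part (Dsh a k b e) j = 1 := part_Dsh_one (by omega) (by omega)
            omega
          · have p1 : part (Dsh (a + 1) k (b - 1) e) j = 0 := part_Dsh_zero (by omega)
            have p2 : part (Dsh a k b e) j = 0 := part_Dsh_zero (by omega)
            omega
      · omega


lemma cd_swap' {a k b e : ℕ} (hk : 3 ≤ k) (hb : 1 ≤ b) (q : ℕ × ℕ) :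
    q ∈ cd (Dsh a k b e) ↔ rho a q ∈ cd (Dsh (a + 1) k (b - 1) e) := by
  have h := cd_swap (a := a) (e := e) hk hb (rho a q)
  rw [rho_invol] at h
  exact h.symm

lemma list_eq_of_part {β γ : List ℕ} (hlen : β.length = γ.length)
    (h : ∀ j, 1 ≤ j → j ≤ β.length → part β j = part γ j) : β = γ := by
  apply List.ext_getElem hlen
  intro i h1 h2
  have := h (i + 1) (by omega) (by omega)
  simp only [part, Nat.add_sub_cancel] at this
  rwa [List.getD_eq_getElem _ _ h1, List.getD_eq_getElem _ _ h2] at this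

lemma part_pos_s13 {m : ℕ} {β : List ℕ} (h : IsComposition m β) {j : ℕ}
    (h1 : 1 ≤ j) (h2 : j ≤ β.length) : 1 ≤ part β j := by
  unfold part
  rw [List.getD_eq_getElem _ _ (by omega)]
  exact h.1 _ (List.getElem_mem _)

lemma part_peak {m : ℕ} {β : List ℕ} (h : IsPeakComposition m β) {j : ℕ}
    (h1 : 1 ≤ j) (h2 : j < β.length) : 2 ≤ part β j := by
  have := h.2 (j - 1) (by omega)
  have e : part β j = β.getD (j - 1) 0 := rfl
  omega

lemma sub_facts {γ β : List ℕ} {m : ℕ} (hβ : IsPeakComposition m β)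
    (hsub : ∀ q ∈ cd β, q ∈ cd γ) {j : ℕ} (h1 : 1 ≤ j) (h2 : j ≤ β.length) :
    j ≤ γ.length ∧ part β j ≤ part γ j := by
  have hp : (part β j, j) ∈ cd β := mem_cd_s13.2 ⟨part_pos_s13 hβ.1 h1 h2, h1, h2, le_refl _⟩
  have := mem_cd_s13.1 (hsub _ hp)
  exact ⟨this.2.2.1, this.2.2.2⟩

/-- Shape lemma, upward direction. -/
lemma shape_up {a k b e m : ℕ} {β : List ℕ} (hk : 3 ≤ k) (hb : 1 ≤ b)
    (hβ : IsPeakComposition m β)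
    (hsub : ∀ q ∈ cd β, q ∈ cd (Dsh a k b e))
    (hfill : (3, a + 1) ∈ cd β → (2, a + 2) ∈ cd β) :
    ∃ β', IsPeakComposition m β' ∧ ∀ p, (rho a p ∈ cd β ↔ p ∈ cd β') := by
  by_cases hcase : a + 1 ≤ β.length ∧ 3 ≤ part β (a + 1)
  · -- swap case
    obtain ⟨hl, hg⟩ := hcase
    have h3cd : (3, a + 1) ∈ cd β := mem_cd_s13.2 ⟨by omega, by omega, hl, hg⟩
    have h22 := hfill h3cd
    have h22' := mem_cd_s13.1 h22
    have hl2 : a + 2 ≤ β.length := h22'.2.2.1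
    have hp22 : part β (a + 2) = 2 := by
      have hle := (sub_facts hβ hsub (by omega) hl2).2
      have hv : part (Dsh a k b e) (a + 2) = 2 := part_Dsh_high (by omega) (by omega)
      omega
    obtain ⟨e', he', hep1, hep0⟩ :
        ∃ e', e' ≤ 1 ∧ (e' = 1 → part β β.length = 1) ∧ (e' = 0 → part β β.length ≠ 1) := by
      by_cases h : part β β.length = 1
      · exact ⟨1, by omega, fun _ => h, by omega⟩
      · exact ⟨0, by omega, by omega, fun _ => h⟩
    have hLne : e' = 1 → a + 3 ≤ β.length := by
      intro h
      have h1 := hep1 h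
      rcases Nat.lt_or_ge β.length (a + 3) with hlt | hge
      · have heq : β.length = a + 2 := by omega
        rw [heq] at h1
        omega
      · exact hge
    obtain ⟨r, hre⟩ : ∃ r, r = β.length - (a + 1) - e' := ⟨_, rfl⟩
    have hr : 1 ≤ r := by
      rcases (by omega : e' = 0 ∨ e' = 1) with h | h
      · omega
      · have := hLne h; omega
    have hLeq : β.length = a + 1 + r + e' := by
      rcases (by omega : e' = 0 ∨ e' = 1) with h | h
      · omega
      · have := hLne h; omega
    have hβeq : β = Dsh a (part β (a + 1)) r e' := by
      apply list_eq_of_part (by rw [length_Dsh]; omega)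
      intro j h1 h2
      rcases (by omega :
          j ≤ a ∨ j = a + 1 ∨ (a + 1 < j ∧ j ≤ a + 1 + r) ∨
            (a + 1 + r < j ∧ j ≤ a + 1 + r + e')) with h | h | h | h
      · rw [part_Dsh_low h1 h]
        have hpk := part_peak hβ h1 (by omega)
        have hsf := (sub_facts hβ hsub h1 h2).2
        have hval : part (Dsh a k b e) j = 2 := part_Dsh_low h1 h
        omega
      · rw [h, part_Dsh_mid]
      · have hrhs : part (Dsh a (part β (a + 1)) r e') j = 2 := part_Dsh_high h.1 h.2
        rw [hrhs]
        have hle2 : part (Dsh a k b e) j ≤ 2 := part_Dsh_le2 h1 (by omega)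
        have hbig := (sub_facts hβ hsub h1 h2).2
        rcases Nat.lt_or_ge j β.length with hjL | hjL
        · have hpk := part_peak hβ h1 hjL
          omega
        · have he0 : e' = 0 := by omega
          have hne1 := hep0 he0
          have hjL' : j = β.length := by omega
          rw [← hjL'] at hne1
          have hpos1 := part_pos_s13 hβ.1 h1 h2
          omega
      · have he1 : e' = 1 := by omega
        have hjL : j = β.length := by omega
        rw [part_Dsh_one h.1 h.2, hjL]
        exact hep1 he1
    refine ⟨Dsh (a + 1) (part β (a + 1)) (r - 1) e', ?_, ?_⟩
    · have hp := peak_Dsh (a := a + 1) (b := r - 1) (show 2 ≤ part β (a + 1) by omega) he'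
      have hsum : (Dsh (a + 1) (part β (a + 1)) (r - 1) e').sum = m := by
        rw [sum_Dsh]
        have hm : β.sum = m := hβ.1.2
        rw [hβeq, sum_Dsh] at hm
        omega
      rwa [hsum] at hp
    · intro p
      conv_lhs => rw [hβeq]
      exact (cd_swap (show 3 ≤ part β (a + 1) by omega) hr p).symm
  · -- identity case
    refine ⟨β, hβ, ?_⟩
    rintro ⟨c, j⟩
    by_cases h1 : 3 ≤ c ∧ j = a + 1
    · obtain ⟨hc, rfl⟩ := h1
      have e1 : rho a (c, a + 1) = (c, a + 2) := by rw [rho_pair, if_pos ⟨hc, rfl⟩]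
      rw [e1]
      constructor <;> intro h <;> exfalso
      · have hm := mem_cd_s13.1 h
        have hle := (sub_facts hβ hsub hm.2.1 hm.2.2.1).2
        have hv : part (Dsh a k b e) (a + 2) = 2 := part_Dsh_high (by omega) (by omega)
        omega
      · have hm := mem_cd_s13.1 h
        exact hcase ⟨hm.2.2.1, by omega⟩
    · by_cases h2 : 3 ≤ c ∧ j = a + 2
      · obtain ⟨hc, rfl⟩ := h2
        have e1 : rho a (c, a + 2) = (c, a + 1) := by
          rw [rho_pair, if_neg (by omega), if_pos ⟨hc, rfl⟩]
        rw [e1]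
        constructor <;> intro h <;> exfalso
        · have hm := mem_cd_s13.1 h
          exact hcase ⟨hm.2.2.1, by omega⟩
        · have hm := mem_cd_s13.1 h
          have hle := (sub_facts hβ hsub hm.2.1 hm.2.2.1).2
          have hv : part (Dsh a k b e) (a + 2) = 2 := part_Dsh_high (by omega) (by omega)
          omega
      · have e1 : rho a (c, j) = (c, j) := by rw [rho_pair, if_neg h1, if_neg h2]
        rw [e1]

/-- Shape lemma, downward direction. -/
lemma shape_down {a k b e m : ℕ} {β : List ℕ} (hk : 3 ≤ k) (hb : 1 ≤ b)
    (hβ : IsPeakComposition m β)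
    (hsub : ∀ q ∈ cd β, q ∈ cd (Dsh (a + 1) k (b - 1) e)) :
    ∃ β', IsPeakComposition m β' ∧ ∀ p, (rho a p ∈ cd β ↔ p ∈ cd β') := by
  by_cases hcase : a + 2 ≤ β.length ∧ 3 ≤ part β (a + 2)
  · obtain ⟨hl, hg⟩ := hcase
    have hp21 : part β (a + 1) = 2 := by
      have hle := (sub_facts hβ hsub (j := a + 1) (by omega) (by omega)).2
      have h2 : part (Dsh (a + 1) k (b - 1) e) (a + 1) = 2 := part_Dsh_low (by omega) (by omega)
      have hpk := part_peak hβ (show 1 ≤ a + 1 by omega) (by omega)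
      omega
    obtain ⟨e', he', hep1, hep0⟩ :
        ∃ e', e' ≤ 1 ∧ (e' = 1 → part β β.length = 1) ∧ (e' = 0 → part β β.length ≠ 1) := by
      by_cases h : part β β.length = 1
      · exact ⟨1, by omega, fun _ => h, by omega⟩
      · exact ⟨0, by omega, by omega, fun _ => h⟩
    have hLne : e' = 1 → a + 3 ≤ β.length := by
      intro h
      have h1 := hep1 h
      rcases Nat.lt_or_ge β.length (a + 3) with hlt | hge
      · have heq : β.length = a + 2 := by omega
        rw [heq] at h1
        omega
      · exact hge
    obtain ⟨r, hre⟩ : ∃ r, r = β.length - (a + 2) - e' := ⟨_, rfl⟩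
    have hLeq : β.length = a + 2 + r + e' := by
      rcases (by omega : e' = 0 ∨ e' = 1) with h | h
      · omega
      · have := hLne h; omega
    have hβeq : β = Dsh (a + 1) (part β (a + 2)) r e' := by
      apply list_eq_of_part (by rw [length_Dsh]; omega)
      intro j h1 h2
      rcases (by omega :
          j ≤ a + 1 ∨ j = a + 2 ∨ (a + 2 < j ∧ j ≤ a + 2 + r) ∨
            (a + 2 + r < j ∧ j ≤ a + 2 + r + e')) with h | h | h | h
      · rw [part_Dsh_low h1 h]
        have hpk := part_peak hβ h1 (by omega)
        have hsf := (sub_facts hβ hsub h1 h2).2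
        have hval : part (Dsh (a + 1) k (b - 1) e) j = 2 := part_Dsh_low h1 h
        omega
      · have hv : part (Dsh (a + 1) (part β (a + 2)) r e') (a + 2) = part β (a + 2) :=
          part_Dsh_mid
        rw [h, hv]
      · have hrhs : part (Dsh (a + 1) (part β (a + 2)) r e') j = 2 :=
          part_Dsh_high (by omega) (by omega)
        rw [hrhs]
        have hle2 : part (Dsh (a + 1) k (b - 1) e) j ≤ 2 := part_Dsh_le2 h1 (by omega)
        have hbig := (sub_facts hβ hsub h1 h2).2
        rcases Nat.lt_or_ge j β.length with hjL | hjL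
        · have hpk := part_peak hβ h1 hjL
          omega
        · have he0 : e' = 0 := by omega
          have hne1 := hep0 he0
          have hjL' : j = β.length := by omega
          rw [← hjL'] at hne1
          have hpos1 := part_pos_s13 hβ.1 h1 h2
          omega
      · have he1 : e' = 1 := by omega
        have hjL : j = β.length := by omega
        have hrhs : part (Dsh (a + 1) (part β (a + 2)) r e') j = 1 :=
          part_Dsh_one (by omega) (by omega)
        rw [hrhs, hjL]
        exact hep1 he1
    refine ⟨Dsh a (part β (a + 2)) (r + 1) e', ?_, ?_⟩
    · have hp := peak_Dsh (a := a) (b := r + 1) (show 2 ≤ part β (a + 2) by omega) he'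
      have hsum : (Dsh a (part β (a + 2)) (r + 1) e').sum = m := by
        rw [sum_Dsh]
        have hm : β.sum = m := hβ.1.2
        rw [hβeq, sum_Dsh] at hm
        omega
      rwa [hsum] at hp
    · intro p
      conv_lhs => rw [hβeq]
      have := cd_swap (a := a) (k := part β (a + 2)) (b := r + 1) (e := e')
        (show 3 ≤ part β (a + 2) by omega) (by omega) (rho a p)
      rw [rho_invol] at this
      simp only [Nat.add_sub_cancel] at this
      exact this
  · refine ⟨β, hβ, ?_⟩
    rintro ⟨c, j⟩
    by_cases h1 : 3 ≤ c ∧ j = a + 1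
    · obtain ⟨hc, rfl⟩ := h1
      have e1 : rho a (c, a + 1) = (c, a + 2) := by rw [rho_pair, if_pos ⟨hc, rfl⟩]
      rw [e1]
      constructor <;> intro h <;> exfalso
      · have hm := mem_cd_s13.1 h
        exact hcase ⟨hm.2.2.1, by omega⟩
      · have hm := mem_cd_s13.1 h
        have hle := (sub_facts hβ hsub hm.2.1 hm.2.2.1).2
        have hv : part (Dsh (a + 1) k (b - 1) e) (a + 1) = 2 := part_Dsh_low (by omega) (by omega)
        omega
    · by_cases h2 : 3 ≤ c ∧ j = a + 2
      · obtain ⟨hc, rfl⟩ := h2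
        have e1 : rho a (c, a + 2) = (c, a + 1) := by
          rw [rho_pair, if_neg (by omega), if_pos ⟨hc, rfl⟩]
        rw [e1]
        constructor <;> intro h <;> exfalso
        · have hm := mem_cd_s13.1 h
          have hle := (sub_facts hβ hsub hm.2.1 hm.2.2.1).2
          have hv : part (Dsh (a + 1) k (b - 1) e) (a + 1) = 2 :=
            part_Dsh_low (by omega) (by omega)
          omega
        · have hm := mem_cd_s13.1 h
          exact hcase ⟨hm.2.2.1, by omega⟩
      · have e1 : rho a (c, j) = (c, j) := by rw [rho_pair, if_neg h1, if_neg h2]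
        rw [e1]


lemma rho_bijOn {a k b e : ℕ} (hk : 3 ≤ k) (hb : 1 ≤ b) :
    Set.BijOn (rho a) (cd (Dsh (a + 1) k (b - 1) e) : Set (ℕ × ℕ))
      (cd (Dsh a k b e) : Set (ℕ × ℕ)) := by
  refine ⟨?_, fun x _ y _ h => rho_inj a h, ?_⟩
  · intro p hp
    simp only [Finset.mem_coe] at hp ⊢
    exact (cd_swap hk hb p).1 hp
  · intro q hq
    simp only [Finset.mem_coe] at hq
    refine ⟨rho a q, ?_, rho_invol a q⟩
    simp only [Finset.mem_coe]
    rw [cd_swap hk hb, rho_invol]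
    exact hq

lemma sum_Dsh_swap (a k b e : ℕ) (hb : 1 ≤ b) :
    (Dsh (a + 1) k (b - 1) e).sum = (Dsh a k b e).sum := by
  rw [sum_Dsh, sum_Dsh]; omega

/-- Transfer of a SPIT from `Dsh a k b e` to `Dsh (a+1) k (b-1) e`. -/
lemma spit_swap {a k b e : ℕ} {T : ℕ × ℕ → ℕ} (hk : 3 ≤ k) (hb : 1 ≤ b)
    (hT : IsSPIT (Dsh a k b e) T) (hcond : T (2, a + 2) < T (3, a + 1)) :
    IsSPIT (Dsh (a + 1) k (b - 1) e) (fun p => T (rho a p)) := by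
  have hsum := sum_Dsh_swap a k b e hb
  refine ⟨⟨⟨?_, ?_⟩, ?_, ?_⟩, ?_⟩
  · -- bijectivity
    rw [hsum]
    exact hT.1.1.1.comp (rho_bijOn hk hb)
  · -- zero off the diagram
    intro p hp
    apply hT.1.1.2
    intro hmem
    apply hp
    rw [cd_swap hk hb]
    exact hmem
  · -- rows increase
    intro c j h1 h2
    have hc0 : 1 ≤ c := (mem_cd_s13.1 h1).1
    rcases (by omega : c = 1 ∨ c = 2 ∨ 3 ≤ c) with hc | hc | hc
    · subst hc
      have e1 : rho a (1, j) = (1, j) := rho_low (by omega)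
      have e2 : rho a (1 + 1, j) = (1 + 1, j) := rho_low (by omega)
      have m1 := (cd_swap hk hb _).1 h1
      have m2 := (cd_swap hk hb _).1 h2
      rw [e1] at m1
      rw [e2] at m2
      simp only [e1, e2]
      exact hT.1.2.1 1 j m1 m2
    · subst hc
      -- j must be a + 2
      have hj : j = a + 2 := by
        have hm := mem_cd_s13.1 h2
        by_contra hne
        have := part_Dsh_le2 (a := a + 1) (k := k) (b := b - 1) (e := e)
          (j := j) hm.2.1 (by omega)
        omega
      subst hj
      have e1 : rho a (2, a + 2) = (2, a + 2) := rho_low (by omega)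
      have e2 : rho a (2 + 1, a + 2) = (2 + 1, a + 1) := by
        rw [rho_pair, if_neg (by omega), if_pos ⟨by omega, rfl⟩]
      simp only [e1, e2]
      have h3 : (2 + 1 : ℕ) = 3 := by norm_num
      rw [h3]
      exact hcond
    · -- c ≥ 3 : both cells in the long row a + 2
      have hj : j = a + 2 := by
        have hm := mem_cd_s13.1 h1
        by_contra hne
        have := part_Dsh_le2 (a := a + 1) (k := k) (b := b - 1) (e := e)
          (j := j) hm.2.1 (by omega)
        omega
      subst hj
      have e1 : rho a (c, a + 2) = (c, a + 1) := by
        rw [rho_pair, if_neg (by omega), if_pos ⟨by omega, rfl⟩]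
      have e2 : rho a (c + 1, a + 2) = (c + 1, a + 1) := by
        rw [rho_pair, if_neg (by omega), if_pos ⟨by omega, rfl⟩]
      have m1 := (cd_swap hk hb _).1 h1
      have m2 := (cd_swap hk hb _).1 h2
      rw [e1] at m1
      rw [e2] at m2
      simp only [e1, e2]
      exact hT.1.2.1 c (a + 1) m1 m2
  · -- first column increases
    intro j h1 h2
    have e1 : rho a (1, j) = (1, j) := rho_low (by omega)
    have e2 : rho a (1, j + 1) = (1, j + 1) := rho_low (by omega)
    have m1 := (cd_swap hk hb _).1 h1
    have m2 := (cd_swap hk hb _).1 h2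
    rw [e1] at m1
    rw [e2] at m2
    simp only [e1, e2]
    exact hT.1.2.2 j m1 m2
  · -- peak condition
    intro m hm1 hm2
    rw [hsum] at hm2
    obtain ⟨β, hβ, hfil⟩ := hT.2 m hm1 hm2
    have hsub : ∀ q ∈ cd β, q ∈ cd (Dsh a k b e) := by
      intro q hq
      rw [← hfil] at hq
      exact (Finset.mem_filter.1 hq).1
    have hfill : (3, a + 1) ∈ cd β → (2, a + 2) ∈ cd β := by
      intro h3
      rw [← hfil] at h3 ⊢
      have h3' := Finset.mem_filter.1 h3
      refine Finset.mem_filter.2 ⟨?_, ?_⟩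
      · refine mem_cd_s13.2 ⟨by omega, by omega, ?_, ?_⟩
        · rw [length_Dsh]; omega
        · rw [part_Dsh_high (by omega) (by omega)]
      · have := h3'.2
        omega
    obtain ⟨β', hβ', hiff⟩ := shape_up hk hb hβ hsub hfill
    refine ⟨β', hβ', ?_⟩
    apply Finset.ext
    intro p
    rw [Finset.mem_filter, ← hiff, ← hfil, Finset.mem_filter]
    rw [cd_swap hk hb]

/-- Transfer of a SPIT from `Dsh (a+1) k (b-1) e` back to `Dsh a k b e`. -/
lemma spit_swap' {a k b e : ℕ} {T : ℕ × ℕ → ℕ} (hk : 3 ≤ k) (hb : 1 ≤ b)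
    (hT : IsSPIT (Dsh (a + 1) k (b - 1) e) T) :
    IsSPIT (Dsh a k b e) (fun p => T (rho a p)) := by
  have hsum := sum_Dsh_swap a k b e hb
  have hL' : (Dsh (a + 1) k (b - 1) e).length = a + 1 + b + e := by rw [length_Dsh]; omega
  have hcell : ∀ c, 1 ≤ c → c ≤ k → (c, a + 2) ∈ cd (Dsh (a + 1) k (b - 1) e) := by
    intro c hc1 hck
    refine mem_cd_s13.2 ⟨hc1, by omega, by omega, ?_⟩
    have : part (Dsh (a + 1) k (b - 1) e) (a + 2) = k := part_Dsh_mid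
    omega
  refine ⟨⟨⟨?_, ?_⟩, ?_, ?_⟩, ?_⟩
  · rw [← hsum]
    refine hT.1.1.1.comp ?_
    have h := rho_bijOn (a := a) (e := e) hk hb
    refine ⟨?_, fun x _ y _ hh => rho_inj a hh, ?_⟩
    · intro p hp
      simp only [Finset.mem_coe] at hp ⊢
      rw [cd_swap hk hb, rho_invol]
      exact hp
    · intro q hq
      simp only [Finset.mem_coe] at hq
      refine ⟨rho a q, ?_, rho_invol a q⟩
      simp only [Finset.mem_coe]
      exact (cd_swap hk hb q).1 hq
  · intro p hp
    apply hT.1.1.2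
    intro hmem
    apply hp
    exact (cd_swap' hk hb p).2 hmem
  · -- rows increase
    intro c j h1 h2
    have hc0 : 1 ≤ c := (mem_cd_s13.1 h1).1
    rcases (by omega : c = 1 ∨ c = 2 ∨ 3 ≤ c) with hc | hc | hc
    · subst hc
      have e1 : rho a (1, j) = (1, j) := rho_low (by omega)
      have e2 : rho a (1 + 1, j) = (1 + 1, j) := rho_low (by omega)
      have m1 := (cd_swap' hk hb _).1 h1
      have m2 := (cd_swap' hk hb _).1 h2
      rw [e1] at m1
      rw [e2] at m2
      simp only [e1, e2]
      exact hT.1.2.1 1 j m1 m2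
    · subst hc
      have hj : j = a + 1 := by
        have hm := mem_cd_s13.1 h2
        by_contra hne
        have := part_Dsh_le2 (a := a) (k := k) (b := b) (e := e) (j := j) hm.2.1 hne
        omega
      subst hj
      have e1 : rho a (2, a + 1) = (2, a + 1) := rho_low (by omega)
      have e2 : rho a (2 + 1, a + 1) = (2 + 1, a + 2) := by
        rw [rho_pair, if_pos ⟨by omega, rfl⟩]
      simp only [e1, e2]
      have c1 : T (2, a + 1) < T (1, a + 2) :=
        (peak_chain hT (by omega) (hcell 1 (by omega) (by omega))).2
      have c2 : T (1, a + 2) < T (2, a + 2) :=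
        hT.1.2.1 1 (a + 2) (hcell 1 (by omega) (by omega)) (hcell 2 (by omega) (by omega))
      have c3 : T (2, a + 2) < T (2 + 1, a + 2) :=
        hT.1.2.1 2 (a + 2) (hcell 2 (by omega) (by omega)) (hcell 3 (by omega) hk)
      omega
    · have hj : j = a + 1 := by
        have hm := mem_cd_s13.1 h1
        by_contra hne
        have := part_Dsh_le2 (a := a) (k := k) (b := b) (e := e) (j := j) hm.2.1 hne
        omega
      subst hj
      have e1 : rho a (c, a + 1) = (c, a + 2) := by
        rw [rho_pair, if_pos ⟨by omega, rfl⟩]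
      have e2 : rho a (c + 1, a + 1) = (c + 1, a + 2) := by
        rw [rho_pair, if_pos ⟨by omega, rfl⟩]
      have m1 := (cd_swap' hk hb _).1 h1
      have m2 := (cd_swap' hk hb _).1 h2
      rw [e1] at m1
      rw [e2] at m2
      simp only [e1, e2]
      exact hT.1.2.1 c (a + 2) m1 m2
  · -- first column increases
    intro j h1 h2
    have e1 : rho a (1, j) = (1, j) := rho_low (by omega)
    have e2 : rho a (1, j + 1) = (1, j + 1) := rho_low (by omega)
    have m1 := (cd_swap' hk hb _).1 h1
    have m2 := (cd_swap' hk hb _).1 h2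
    rw [e1] at m1
    rw [e2] at m2
    simp only [e1, e2]
    exact hT.1.2.2 j m1 m2
  · -- peak condition
    intro m hm1 hm2
    rw [← hsum] at hm2
    obtain ⟨β, hβ, hfil⟩ := hT.2 m hm1 hm2
    have hsub : ∀ q ∈ cd β, q ∈ cd (Dsh (a + 1) k (b - 1) e) := by
      intro q hq
      rw [← hfil] at hq
      exact (Finset.mem_filter.1 hq).1
    obtain ⟨β', hβ', hiff⟩ := shape_down hk hb hβ hsub
    refine ⟨β', hβ', ?_⟩
    apply Finset.ext
    intro p
    rw [Finset.mem_filter, ← hiff, ← hfil, Finset.mem_filter, cd_swap' hk hb]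

/-- The transferred tableau satisfies the swap condition. -/
lemma spit_swap'_cond {a k b e : ℕ} {T : ℕ × ℕ → ℕ} (hk : 3 ≤ k) (hb : 1 ≤ b)
    (hT : IsSPIT (Dsh (a + 1) k (b - 1) e) T) :
    T (rho a (2, a + 2)) < T (rho a (3, a + 1)) := by
  have hcell : ∀ c, 1 ≤ c → c ≤ k → (c, a + 2) ∈ cd (Dsh (a + 1) k (b - 1) e) := by
    intro c hc1 hck
    refine mem_cd_s13.2 ⟨hc1, by omega, ?_, ?_⟩
    · rw [length_Dsh]; omega
    · have : part (Dsh (a + 1) k (b - 1) e) (a + 2) = k := part_Dsh_mid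
      omega
  have e1 : rho a (2, a + 2) = (2, a + 2) := rho_low (by omega)
  have e2 : rho a (3, a + 1) = (3, a + 2) := by
    rw [rho_pair, if_pos ⟨by omega, rfl⟩]
  rw [e1, e2]
  exact hT.1.2.1 2 (a + 2) (hcell 2 (by omega) (by omega)) (hcell 3 (by omega) hk)


lemma hpos_Dsh {a k b e : ℕ} (hk : 1 ≤ k) :
    ∀ m, 1 ≤ m → m ≤ (Dsh a k b e).length → 1 ≤ part (Dsh a k b e) m := by
  intro m h1 h2
  exact part_pos_s13 (m := (Dsh a k b e).sum) ⟨pos_Dsh hk, rfl⟩ h1 h2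

/-- Characterization of SPYCTs among SPITs for shapes `Dsh a k b e` with `k ≥ 3`, `b ≥ 1`. -/
lemma spyct_iff {a k b e : ℕ} (hk : 3 ≤ k) (hb : 1 ≤ b) {T : ℕ × ℕ → ℕ}
    (hT : IsSPIT (Dsh a k b e) T) :
    IsSPYCT (Dsh a k b e) T ↔ T (3, a + 1) < T (2, a + 2) := by
  have hL : (Dsh a k b e).length = a + 1 + b + e := length_Dsh a k b e
  have h3cd : (3, a + 1) ∈ cd (Dsh a k b e) := by
    refine mem_cd_s13.2 ⟨by omega, by omega, by omega, ?_⟩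
    rw [part_Dsh_mid]; omega
  have h22cd : (2, a + 2) ∈ cd (Dsh a k b e) := by
    refine mem_cd_s13.2 ⟨by omega, by omega, by omega, ?_⟩
    rw [part_Dsh_high (by omega) (by omega)]
  constructor
  · intro hY
    by_contra hcon
    have hle : T (2, a + 2) ≤ T (3, a + 1) := by omega
    have := hY.1.2.2.2 2 (a + 1) (a + 2) (by omega) h22cd h3cd hle
    have h3 := mem_cd_s13.1 this.1
    have : part (Dsh a k b e) (a + 2) = 2 := part_Dsh_high (by omega) (by omega)
    omega
  · intro hlt
    refine ⟨⟨hT.1.1, hT.1.2.1, hT.1.2.2, ?_⟩, hT.2⟩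
    intro c i j hij hcj hci1 hle
    exfalso
    have hci1' := mem_cd_s13.1 hci1
    have hcj' := mem_cd_s13.1 hcj
    rcases (by omega : c = 1 ∨ 2 ≤ c) with hc | hc
    · subst hc
      have := two_lt_col1 hT (hpos_Dsh (by omega)) hij hcj'.2.2.1
        (mem_cd_s13.2 ⟨by omega, hci1'.2.1, hci1'.2.2.1, hci1'.2.2.2⟩)
      have hcol : T (1, j) ≤ T (2, i) := hle
      omega
    · -- c ≥ 2 forces i = a + 1 and c = 2
      have hia : i = a + 1 := by
        by_contra hne
        have := part_Dsh_le2 (a := a) (k := k) (b := b) (e := e) (j := i) hci1'.2.1 hne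
        omega
      have hja : j ≠ a + 1 := by omega
      have hjle := part_Dsh_le2 (a := a) (k := k) (b := b) (e := e) (j := j) hcj'.2.1 hja
      have hc2 : c = 2 := by omega
      -- j is in the 2-block above row a+1
      have hjb : j ≤ a + 1 + b := by
        by_contra hcon2
        rcases (by omega : (a + 1 + b < j ∧ j ≤ a + 1 + b + e) ∨ a + 1 + b + e < j) with h | h
        · have := part_Dsh_one (a := a) (k := k) (b := b) (e := e) h.1 h.2
          omega
        · have := part_Dsh_zero (a := a) (k := k) (b := b) (e := e) h
          omega
      have hmono : T (2, a + 2) ≤ T (2, j) := by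
        apply col2_mono hT (by omega)
        intro mm hm1 hm2
        refine mem_cd_s13.2 ⟨by omega, by omega, by omega, ?_⟩
        rw [part_Dsh_high (by omega) (by omega)]
      have e2 : c + 1 = 3 := by omega
      rw [e2, hc2, hia] at hle
      omega

lemma filter_range_single {n j0 : ℕ} {p : ℕ → Bool} (h0 : j0 < n) (hp : p j0 = true)
    (huniq : ∀ j, j < n → p j = true → j = j0) : (List.range n).filter p = [j0] := by
  induction n with
  | zero => exact absurd h0 (by omega)
  | succ n ih =>
    rw [List.range_succ, List.filter_append]
    rcases (by omega : j0 = n ∨ j0 < n) with h | h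
    · subst h
      have h1 : (List.range j0).filter p = [] := by
        apply List.filter_eq_nil_iff.2
        intro x hx
        intro hpx
        have := huniq x (by simp at hx; omega) hpx
        simp at hx
        omega
      rw [h1]
      simp [hp]
    · have h2 : List.filter p [n] = [] := by
        have hpn : p n = false := by
          rcases Bool.eq_false_or_eq_true (p n) with hb' | hb'
          · exact absurd (huniq n (by omega) hb') (by omega)
          · exact hb'
        simp [List.filter, hpn]
      rw [h2, ih h (fun j hj hpj => huniq j (by omega) hpj)]
      simp

/-- The column reading word is preserved under the swap. -/
lemma wc_swap {a k b e : ℕ} (hk : 3 ≤ k) (hb : 1 ≤ b) (T : ℕ × ℕ → ℕ) :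
    wC (Dsh (a + 1) k (b - 1) e) (fun p => T (rho a p)) = wC (Dsh a k b e) T := by
  unfold wC
  rw [maxPart_Dsh (by omega), maxPart_Dsh (by omega)]
  congr 1
  apply List.map_congr_left
  intro i hi
  simp only [List.mem_range] at hi
  set c := i + 1 with hc
  have hc1 : 1 ≤ c := by omega
  have hck : c ≤ k := by omega
  unfold colList
  have hL : (Dsh a k b e).length = a + 1 + b + e := length_Dsh a k b e
  have hL' : (Dsh (a + 1) k (b - 1) e).length = a + 1 + b + e := by rw [length_Dsh]; omega
  rw [hL, hL']
  rcases (by omega : c ≤ 2 ∨ 3 ≤ c) with hc2 | hc2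
  · -- low columns: filters and values agree
    have hfil : ((List.range (a + 1 + b + e)).filter
        fun j => decide (c ≤ part (Dsh (a + 1) k (b - 1) e) (j + 1))) =
        ((List.range (a + 1 + b + e)).filter
        fun j => decide (c ≤ part (Dsh a k b e) (j + 1))) := by
      apply List.filter_congr
      intro j hj
      simp only [List.mem_range] at hj
      simp only [decide_eq_decide]
      rcases (by omega : j + 1 ≤ a ∨ j + 1 = a + 1 ∨ j + 1 = a + 2 ∨
          (a + 2 < j + 1 ∧ j + 1 ≤ a + 1 + b) ∨ (a + 1 + b < j + 1 ∧ j + 1 ≤ a + 1 + b + e))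
        with h | h | h | h | h
      · rw [part_Dsh_low (by omega) (by omega), part_Dsh_low (by omega) (by omega)]
      · rw [h]
        rw [part_Dsh_low (by omega) (by omega), part_Dsh_mid]
        omega
      · rw [h]
        have hv : part (Dsh (a + 1) k (b - 1) e) (a + 2) = k := part_Dsh_mid
        rw [hv, part_Dsh_high (by omega) (by omega)]
        omega
      · rw [part_Dsh_high (by omega) (by omega), part_Dsh_high (by omega) (by omega)]
      · rw [part_Dsh_one (by omega) (by omega), part_Dsh_one (by omega) (by omega)]
    rw [hfil]
    apply List.map_congr_left
    intro j hj
    show T (rho a (c, j + 1)) = T (c, j + 1)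
    rw [rho_low hc2]
  · -- high columns: single cell
    have hf1 : ((List.range (a + 1 + b + e)).filter
        fun j => decide (c ≤ part (Dsh (a + 1) k (b - 1) e) (j + 1))) = [a + 1] := by
      apply filter_range_single (by omega)
      · simp only [decide_eq_true_eq]
        have hv : part (Dsh (a + 1) k (b - 1) e) (a + 2) = k := part_Dsh_mid
        rw [hv]; omega
      · intro j hj hpj
        simp only [decide_eq_true_eq] at hpj
        by_contra hne
        have := part_Dsh_le2 (a := a + 1) (k := k) (b := b - 1) (e := e) (j := j + 1)
          (by omega) (by omega)
        omega
    have hf2 : ((List.range (a + 1 + b + e)).filter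
        fun j => decide (c ≤ part (Dsh a k b e) (j + 1))) = [a] := by
      apply filter_range_single (by omega)
      · simp only [decide_eq_true_eq]
        rw [part_Dsh_mid]; omega
      · intro j hj hpj
        simp only [decide_eq_true_eq] at hpj
        by_contra hne
        have := part_Dsh_le2 (a := a) (k := k) (b := b) (e := e) (j := j + 1)
          (by omega) (by omega)
        omega
    rw [hf1, hf2]
    simp only [List.map_cons, List.map_nil]
    show [T (rho a (c, a + 1 + 1))] = [T (c, a + 1)]
    have e1 : rho a (c, a + 1 + 1) = (c, a + 1) := by
      rw [rho_pair, if_neg (by omega), if_pos ⟨by omega, by omega⟩]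
    rw [e1]



/-- Young triple condition is vacuous for shapes `(2^a, k)` and `(2^a, k, 1)`. -/
lemma young_vacuous {a k e : ℕ} (hk : 2 ≤ k) (he : e ≤ 1) {T : ℕ × ℕ → ℕ}
    (hT : IsSPIT (Dsh a k 0 e) T) : YoungTriple (Dsh a k 0 e) T := by
  intro c i j hij hcj hci1 hle
  exfalso
  have hcj' := mem_cd_s13.1 hcj
  have hci1' := mem_cd_s13.1 hci1
  have hL : (Dsh a k 0 e).length = a + 1 + e := by rw [length_Dsh]
  rcases (by omega : c = 1 ∨ 2 ≤ c) with hc | hc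
  · subst hc
    have := two_lt_col1 hT (hpos_Dsh (by omega)) hij hcj'.2.2.1
      (mem_cd_s13.2 ⟨by omega, hci1'.2.1, hci1'.2.2.1, hci1'.2.2.2⟩)
    have hcol : T (1, j) ≤ T (2, i) := hle
    omega
  · by_cases hia : i = a + 1
    · -- then j > a + 1, so part at row j is ≤ 1 < c
      have hj2 : a + 1 < j := by omega
      rcases (by omega : (a + 1 + 0 < j ∧ j ≤ a + 1 + 0 + e) ∨ a + 1 + 0 + e < j) with h | h
      · have := part_Dsh_one (a := a) (k := k) (b := 0) (e := e) h.1 h.2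
        omega
      · have := part_Dsh_zero (a := a) (k := k) (b := 0) (e := e) h
        omega
    · have := part_Dsh_le2 (a := a) (k := k) (b := 0) (e := e) (j := i) hci1'.2.1 hia
      omega

lemma shape_eq1 (a k : ℕ) : List.replicate a 2 ++ [k] = Dsh a k 0 0 := by simp [Dsh]
lemma shape_eq2 (a k : ℕ) : List.replicate a 2 ++ [k, 1] = Dsh a k 0 1 := by simp [Dsh]
lemma shape_eq3 (a k b : ℕ) : List.replicate a 2 ++ k :: List.replicate b 2 = Dsh a k b 0 := by
  simp [Dsh]
lemma shape_eq4 (a k b : ℕ) :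
    List.replicate a 2 ++ k :: List.replicate b 2 ++ [1] = Dsh a k b 1 := by
  simp [Dsh]
lemma rep_shift (a x : ℕ) (X : List ℕ) :
    List.replicate a x ++ x :: X = x :: (List.replicate a x ++ X) := by
  induction a with
  | zero => simp
  | succ a ih => simp [List.replicate_succ, ih]
lemma shape_eq5 (a k b : ℕ) :
    List.replicate a 2 ++ 2 :: k :: List.replicate (b - 1) 2 = Dsh (a + 1) k (b - 1) 0 := by
  simp [Dsh, List.replicate_succ, rep_shift]
lemma shape_eq6 (a k b : ℕ) :
    List.replicate a 2 ++ 2 :: k :: List.replicate (b - 1) 2 ++ [1] = Dsh (a + 1) k (b - 1) 1 := by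
  simp [Dsh, List.replicate_succ, rep_shift]

/-- Branch 1: shapes `(2^a, k)` and `(2^a, k, 1)`. -/
lemma branch1_main {a k e : ℕ} (hk : 2 ≤ k) (he : e ≤ 1) (n : ℕ) :
    PYQS n (Dsh a k 0 e) = QSQ n (Dsh a k 0 e) := by
  have hmax : 1 ≤ maxPart (Dsh a k 0 e) := by rw [maxPart_Dsh hk]; omega
  have hsp : SPYCTset (Dsh a k 0 e) = SPITset (Dsh a k 0 e) := by
    apply Set.ext
    intro T
    constructor
    · exact spyct_subset_spit _ T
    · intro hT
      exact ⟨⟨hT.1.1, hT.1.2.1, hT.1.2.2, young_vacuous hk he hT⟩, hT.2⟩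
  unfold PYQS QSQ
  apply finsum_mem_congr hsp
  intro T hT
  rw [desword_wY_eq_wC hT (hpos_Dsh (by omega)) hmax]

/-- Branch 2/3: shapes `(2^a, k, 2^b)` and `(2^a, k, 2^b, 1)` with `k ≥ 3`, `b ≥ 1`. -/
lemma branch2_main {a k b e : ℕ} (hk : 3 ≤ k) (hb : 1 ≤ b) (he : e ≤ 1) (n : ℕ) :
    PYQS n (Dsh a k b e) =
      QSQ n (Dsh a k b e) - QSQ n (Dsh (a + 1) k (b - 1) e) := by
  classical
  set α := Dsh a k b e with hα
  set α' := Dsh (a + 1) k (b - 1) e with hα'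
  have hmax : 1 ≤ maxPart α := by rw [hα, maxPart_Dsh (by omega)]; omega
  set S := SPITset α with hS
  set Y := SPYCTset α with hY
  have hYS : Y ⊆ S := fun T hT => spyct_subset_spit α T hT
  have hkey : ∀ T ∈ S, (T ∈ Y ↔ T (3, a + 1) < T (2, a + 2)) := by
    intro T hT
    exact spyct_iff hk hb hT
  -- cells are distinct, so the negation flips
  have hcells : (3, a + 1) ∈ cd α ∧ (2, a + 2) ∈ cd α := by
    constructor
    · refine mem_cd_s13.2 ⟨by omega, by omega, ?_, ?_⟩
      · rw [hα, length_Dsh]; omega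
      · rw [hα, part_Dsh_mid]; omega
    · refine mem_cd_s13.2 ⟨by omega, by omega, ?_, ?_⟩
      · rw [hα, length_Dsh]; omega
      · rw [hα, part_Dsh_high (by omega) (by omega)]
  have hflip : ∀ T ∈ S, T ∉ Y → T (2, a + 2) < T (3, a + 1) := by
    intro T hT hTY
    have h1 : ¬ T (3, a + 1) < T (2, a + 2) := fun h => hTY ((hkey T hT).2 h)
    have hne : T (3, a + 1) ≠ T (2, a + 2) := by
      intro heq
      have := hT.1.1.1.injOn hcells.1 hcells.2 heq
      simp at this
    omega
  -- the bijection
  set Φ : (ℕ × ℕ → ℕ) → (ℕ × ℕ → ℕ) := fun T => fun p => T (rho a p) with hΦ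
  have hbij : Set.BijOn Φ (S \ Y) (SPITset α') := by
    refine ⟨?_, ?_, ?_⟩
    · rintro T ⟨hT, hTY⟩
      exact spit_swap hk hb hT (hflip T hT hTY)
    · rintro T _ T' _ h
      funext p
      have h2 := congrFun h (rho a p)
      simp only [hΦ, rho_invol] at h2
      exact h2
    · intro T' hT'
      refine ⟨Φ T', ⟨?_, ?_⟩, ?_⟩
      · exact spit_swap' hk hb hT'
      · intro hmem
        have hΦS : Φ T' ∈ S := spit_swap' hk hb hT'
        have hc := (hkey _ hΦS).1 hmem
        have hcond := spit_swap'_cond hk hb hT'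
        have e1 : rho a (2, a + 2) = (2, a + 2) := rho_low (by omega)
        have e2 : rho a (3, a + 1) = (3, a + 2) := by
          rw [rho_pair, if_pos ⟨by omega, rfl⟩]
        rw [e1, e2] at hcond
        have v1 : Φ T' (3, a + 1) = T' (3, a + 2) := by
          simp only [hΦ]; rw [e2]
        have v2 : Φ T' (2, a + 2) = T' (2, a + 2) := by
          simp only [hΦ]; rw [e1]
        rw [v1, v2] at hc
        omega
      · funext p
        simp only [hΦ]
        rw [rho_invol]
  have hfinS : S.Finite := spitset_finite α
  have hfinY : Y.Finite := hfinS.subset hYS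
  have hfinSY : (S \ Y).Finite := hfinS.subset (Set.diff_subset)
  have hsum3 : PYQS n α = ∑ᶠ T ∈ Y, Kqs n (compOf n (PeakSet (DesWord (wC α T)))) := by
    unfold PYQS
    apply finsum_mem_congr rfl
    intro T hT
    rw [desword_wY_eq_wC (spyct_subset_spit α T hT) (hpos_Dsh (by omega)) hmax]
  have hsum2 : ∑ᶠ T ∈ S \ Y, Kqs n (compOf n (PeakSet (DesWord (wC α T)))) = QSQ n α' := by
    unfold QSQ
    apply finsum_mem_eq_of_bijOn Φ hbij
    intro T hT
    simp only [hΦ]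
    rw [wc_swap hk hb T]
  have hsum1 : QSQ n α = PYQS n α + QSQ n α' := by
    have hQ : QSQ n α =
        ∑ᶠ T ∈ (Y ∪ (S \ Y)), Kqs n (compOf n (PeakSet (DesWord (wC α T)))) := by
      unfold QSQ
      exact finsum_mem_congr (Set.union_diff_cancel hYS).symm (fun T _ => rfl)
    rw [hQ, finsum_mem_union Set.disjoint_sdiff_right hfinY hfinSY, ← hsum3, hsum2]
  rw [hsum1]
  exact (add_sub_cancel_right _ _).symm

/-- Let `α` be a peak composition with at most one part greater than `2`.
If `α = (2^a, k)` or `α = (2^a, k, 1)` with `k ≥ 2`, then `PYQS_α = QSQ_α`; otherwise,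
i.e. `α = (2^a, k, 2^b)` or `α = (2^a, k, 2^b, 1)` with `k ≥ 3` and `b ≥ 1`, one has
`PYQS_α = QSQ_α − QSQ_{s_i·α}` where `s_i·α` swaps the part `k` with the following `2`. -/
theorem PYQS_hook_like (n : ℕ) (α : List ℕ) (hα : IsPeakComposition n α)
    (hone : α.countP (fun a => decide (2 < a)) ≤ 1) :
    ((∀ a k : ℕ, 2 ≤ k →
        (α = List.replicate a 2 ++ [k] ∨ α = List.replicate a 2 ++ [k, 1]) →
        PYQS n α = QSQ n α) ∧
     (∀ a b k : ℕ, 3 ≤ k → 1 ≤ b →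
        α = List.replicate a 2 ++ k :: List.replicate b 2 →
        PYQS n α =
          QSQ n α - QSQ n (List.replicate a 2 ++ 2 :: k :: List.replicate (b - 1) 2)) ∧
     (∀ a b k : ℕ, 3 ≤ k → 1 ≤ b →
        α = List.replicate a 2 ++ k :: List.replicate b 2 ++ [1] →
        PYQS n α =
          QSQ n α -
            QSQ n (List.replicate a 2 ++ 2 :: k :: List.replicate (b - 1) 2 ++ [1]))) := by
  refine ⟨?_, ?_, ?_⟩
  · intro a k hk hshape
    rcases hshape with h | h
    · subst h
      rw [shape_eq1]
      exact branch1_main hk (by omega) n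
    · subst h
      rw [shape_eq2]
      exact branch1_main hk (by omega) n
  · intro a b k hk hb h
    subst h
    rw [shape_eq3, shape_eq5]
    exact branch2_main hk hb (by omega) n
  · intro a b k hk hb h
    subst h
    rw [shape_eq4, shape_eq6]
    exact branch2_main hk hb (by omega) n

end PaperSPIT
end
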